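/- arXiv:2501.13907 — 6 statements merged into one kernel-verified Lean document; each statement's English description precedes it below -/
import Mathlib

section
/- For every finite graph G with nonnegative vertex weights, there exists an induced path Q in G such that every connected component of G − N[V(Q)] has weight at most half of the total weight of V(G). -/
/-- Closed neighborhood of a set `S` in a graph `G`. -/
def closedNbhd {V : Type*} (G : SimpleGraph V) (S : Set V) : Set V :=
  S ∪ {v | ∃ s ∈ S, G.Adj s v}

/-- Open neighborhood of a set `S` in a graph `G`. -/
def openNbhd {V : Type*} (G : SimpleGraph V) (S : Set V) : Set V :=
  {v | v ∉ S ∧ ∃ s ∈ S, G.Adj s v}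

/-- Reachability inside the induced subgraph of `G` on the vertex set `T`. -/
def ReachIn {V : Type*} (G : SimpleGraph V) (T : Set V) : V → V → Prop :=
  Relation.ReflTransGen (fun a b => G.Adj a b ∧ a ∈ T ∧ b ∈ T)

/-- Total weight of a vertex set. -/
noncomputable def wsum {V : Type*} [Fintype V] (w : V → ℕ) (S : Set V) : ℕ :=
  ∑ v ∈ S.toFinite.toFinset, w v

/-- `l` is the vertex sequence of an induced path of `G`:
nonempty, no repetitions, and two vertices of `l` are adjacent in `G`
iff they are consecutive in `l`. -/
def IsInducedPathList {V : Type*} (G : SimpleGraph V) (l : List V) : Prop :=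
  l ≠ [] ∧ l.Nodup ∧
  ∀ (i j : ℕ) (hi : i < l.length) (hj : j < l.length),
    G.Adj (l.get ⟨i, hi⟩) (l.get ⟨j, hj⟩) ↔ (i + 1 = j ∨ j + 1 = i)

/-- Every connected component of the induced subgraph of `G` on `T`
has `w`-weight at most `b`. -/
def CompsSmall {V : Type*} [Fintype V] (G : SimpleGraph V) (w : V → ℕ)
    (T : Set V) (b : ℕ) : Prop :=
  ∀ v ∈ T, wsum w {u | ReachIn G T v u} ≤ b

/-- `x`, `y`, `z` form a triangle in `H`. -/
def Tri {H' : Type*} (H : SimpleGraph H') (x y z : H') : Prop :=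
  H.Adj x y ∧ H.Adj y z ∧ H.Adj x z

/-- An extended strip decomposition `(H, η)` of a graph `G`.
`ηv x` is `η(x)`, `ηe x y` is `η(xy)`, `ηi x y` is the interface `η(xy, x)`,
and `ηt x y z` is `η(xyz)`. -/
structure ESD {V : Type*} {H' : Type*} (G : SimpleGraph V) (H : SimpleGraph H') where
  ηv : H' → Set V
  ηe : H' → H' → Set V
  ηi : H' → H' → Set V
  ηt : H' → H' → H' → Set V
  ηe_symm : ∀ x y, ηe x y = ηe y x
  ηt_symm12 : ∀ x y z, ηt x y z = ηt y x z
  ηt_symm23 : ∀ x y z, ηt x y z = ηt x z y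
  ηe_empty : ∀ x y, ¬ H.Adj x y → ηe x y = ∅
  ηt_empty : ∀ x y z, ¬ Tri H x y z → ηt x y z = ∅
  ηi_sub : ∀ x y, ηi x y ⊆ ηe x y
  cover : ∀ v : V, (∃ x, v ∈ ηv x) ∨ (∃ x y, v ∈ ηe x y) ∨ (∃ x y z, v ∈ ηt x y z)
  disj_vv : ∀ x y, x ≠ y → ηv x ∩ ηv y = ∅
  disj_ve : ∀ x y z, ηv x ∩ ηe y z = ∅
  disj_vt : ∀ x a b c, ηv x ∩ ηt a b c = ∅
  disj_ee : ∀ x y a b, ¬ (x = a ∧ y = b) → ¬ (x = b ∧ y = a) → ηe x y ∩ ηe a b = ∅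
  disj_et : ∀ x y a b c, ηe x y ∩ ηt a b c = ∅
  disj_tt : ∀ a b c d e f, ({a, b, c} : Set H') ≠ ({d, e, f} : Set H') →
    ηt a b c ∩ ηt d e f = ∅
  complete : ∀ x y z, H.Adj x y → H.Adj x z → y ≠ z →
    ∀ u ∈ ηi x y, ∀ v ∈ ηi x z, G.Adj u v
  edge_cond : ∀ u v : V, G.Adj u v →
    (∃ x, u ∈ ηv x ∧ v ∈ ηv x) ∨
    (∃ x y, u ∈ ηe x y ∧ v ∈ ηe x y) ∨
    (∃ x y z, u ∈ ηt x y z ∧ v ∈ ηt x y z) ∨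
    (∃ x y z, H.Adj x y ∧ H.Adj x z ∧ y ≠ z ∧
      ((u ∈ ηi x y ∧ v ∈ ηi x z) ∨ (v ∈ ηi x y ∧ u ∈ ηi x z))) ∨
    (∃ x y, H.Adj x y ∧ ((u ∈ ηi x y ∧ v ∈ ηv x) ∨ (v ∈ ηi x y ∧ u ∈ ηv x))) ∨
    (∃ x y z, Tri H x y z ∧
      ((u ∈ ηt x y z ∧ v ∈ ηi x y ∩ ηi y x) ∨ (v ∈ ηt x y z ∧ u ∈ ηi x y ∩ ηi y x)))

namespace ESD

variable {V : Type*} {H' : Type*} {G : SimpleGraph V} {H : SimpleGraph H'}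

/-- A rigid extended strip decomposition: every edge of `H` has nonempty interfaces
and every isolated vertex `x` of `H` has `η(x) ≠ ∅`. -/
def IsRigid (D : ESD G H) : Prop :=
  (∀ x y, H.Adj x y → (D.ηi x y).Nonempty) ∧
  (∀ x, (∀ y, ¬ H.Adj x y) → (D.ηv x).Nonempty)

/-- A vertex `z` of `G` is peripheral in `(H, η)`. -/
def Peripheral (D : ESD G H) (z : V) : Prop :=
  ∃ x y, H.Adj x y ∧ (∀ u, H.Adj x u → u = y) ∧ D.ηi x y = {z} ∧ D.ηv x = ∅

/-- The full edge particle `A_{pq}^{pq}`. -/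
def fullEdge (D : ESD G H) (p q : H') : Set V :=
  D.ηv p ∪ D.ηv q ∪ D.ηe p q ∪ {v | ∃ r, v ∈ D.ηt p q r}

/-- Every particle of `D` has `w`-weight at most `b`. -/
def ParticlesSmall [Fintype V] (D : ESD G H) (w : V → ℕ) (b : ℕ) : Prop :=
  (∀ x, wsum w (D.ηv x) ≤ b) ∧
  (∀ x y, H.Adj x y → wsum w (D.ηe x y \ (D.ηi x y ∪ D.ηi y x)) ≤ b) ∧
  (∀ x y, H.Adj x y → wsum w (D.ηv x ∪ (D.ηe x y \ D.ηi y x)) ≤ b) ∧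
  (∀ x y, H.Adj x y → wsum w (D.fullEdge x y) ≤ b) ∧
  (∀ x y z, Tri H x y z → wsum w (D.ηt x y z) ≤ b)

end ESD

/-- The subdivided claw `S_{t,t,t}`: a center vertex and three arms of length `t`. -/
def StttRel (t : ℕ) : (Unit ⊕ Fin 3 × Fin t) → (Unit ⊕ Fin 3 × Fin t) → Prop
  | Sum.inl _, Sum.inr p => p.2.val = 0
  | Sum.inr p, Sum.inr q => p.1 = q.1 ∧ p.2.val + 1 = q.2.val
  | _, _ => False

def Sttt (t : ℕ) : SimpleGraph (Unit ⊕ Fin 3 × Fin t) :=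
  SimpleGraph.fromRel (StttRel t)

section GyarfasAux

variable {V : Type*} {G : SimpleGraph V}

lemma reach_symm {T : Set V} {a b : V} (h : ReachIn G T a b) : ReachIn G T b a :=
  by
    haveI : Std.Symm (fun a b : V => G.Adj a b ∧ a ∈ T ∧ b ∈ T) := ⟨fun _ _ h => ⟨h.1.symm, h.2.2, h.2.1⟩⟩
    unfold ReachIn at h ⊢
    exact Std.Symm.symm _ _ h

lemma reach_trans {T : Set V} {a b c : V} (h1 : ReachIn G T a b) (h2 : ReachIn G T b c) :
    ReachIn G T a c :=
  Relation.ReflTransGen.trans h1 h2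

lemma reach_mono {T T' : Set V} (h : T ⊆ T') {a b : V} (hr : ReachIn G T a b) :
    ReachIn G T' a b :=
  Relation.ReflTransGen.mono (r := fun a b => G.Adj a b ∧ a ∈ T ∧ b ∈ T)
    (p := fun a b => G.Adj a b ∧ a ∈ T' ∧ b ∈ T') (fun _ _ hx => ⟨hx.1, h hx.2.1, h hx.2.2⟩) _ _ hr

lemma reach_mem {T : Set V} {a b : V} (ha : a ∈ T) (h : ReachIn G T a b) : b ∈ T := by
  induction h with
  | refl => exact ha
  | tail _ hbc _ => exact hbc.2.2

lemma reach_comp {T : Set V} {v u : V} (h : ReachIn G T v u) :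
    ReachIn G {u' | ReachIn G T v u'} v u := by
  induction h with
  | refl => exact Relation.ReflTransGen.refl
  | @tail b c hb hbc ih =>
      exact Relation.ReflTransGen.tail ih ⟨hbc.1, hb, Relation.ReflTransGen.tail hb hbc⟩

lemma comp_eq_of_mem {T : Set V} {v v' u : V} (h1 : ReachIn G T v u) (h2 : ReachIn G T v' u) :
    {x | ReachIn G T v x} = {x | ReachIn G T v' x} := by
  ext x
  simp only [Set.mem_setOf_eq]
  constructor <;> intro hx
  · exact reach_trans (reach_trans h2 (reach_symm h1)) hx
  · exact reach_trans (reach_trans h1 (reach_symm h2)) hx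

lemma crossing {r : V → V → Prop} {A : Set V} {u v : V} (h : Relation.ReflTransGen r u v)
    (hu : u ∈ A) : v ∉ A → ∃ a b, a ∈ A ∧ b ∉ A ∧ r a b := by
  induction h with
  | refl => intro hv; exact absurd hu hv
  | @tail b c _ hbc ih =>
      intro hv
      by_cases hbA : b ∈ A
      · exact ⟨b, c, hbA, hv, hbc⟩
      · exact ih hbA

lemma closedNbhd_mono {S S' : Set V} (h : S ⊆ S') : closedNbhd G S ⊆ closedNbhd G S' := by
  rintro v (hv | ⟨s, hs, ha⟩)
  · exact Or.inl (h hv)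
  · exact Or.inr ⟨s, h hs, ha⟩

variable [Fintype V] {w : V → ℕ}

lemma wsum_mono {S S' : Set V} (h : S ⊆ S') : wsum w S ≤ wsum w S' :=
  Finset.sum_le_sum_of_subset (Set.Finite.toFinset_subset_toFinset.mpr h)

lemma wsum_disjoint_le {S S' : Set V} (h : Disjoint S S') :
    wsum w S + wsum w S' ≤ wsum w Set.univ := by
  classical
  unfold wsum
  rw [← Finset.sum_union (Set.Finite.disjoint_toFinset.mpr h)]
  apply Finset.sum_le_sum_of_subset
  intro u _
  simp [Set.Finite.mem_toFinset]

lemma big_comp_unique {b : ℕ} (hb : wsum w (Set.univ : Set V) ≤ 2 * b + 1) {T : Set V}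
    {v v' : V} (h1 : b < wsum w {u | ReachIn G T v u}) (h2 : b < wsum w {u | ReachIn G T v' u}) :
    {u | ReachIn G T v' u} = {u | ReachIn G T v u} := by
  by_contra hne
  have hd : Disjoint {u | ReachIn G T v' u} {u | ReachIn G T v u} := by
    by_contra hnd
    obtain ⟨u, hu1, hu2⟩ := Set.not_disjoint_iff.mp hnd
    exact hne (comp_eq_of_mem hu1 hu2)
  have := wsum_disjoint_le (w := w) hd
  omega

lemma single_path (v : V) : IsInducedPathList G [v] := by
  refine ⟨by simp, by simp, ?_⟩
  intro i j hi hj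
  simp only [List.length_singleton] at hi hj
  have hi0 : i = 0 := by omega
  have hj0 : j = 0 := by omega
  subst hi0; subst hj0
  simp [SimpleGraph.irrefl]

lemma induced_path_append {m : List V} (hm : IsInducedPathList G m) {z : V} (hz : z ∉ m)
    (hadj : ∀ (i : ℕ) (hi : i < m.length), G.Adj m[i] z ↔ i + 1 = m.length) :
    IsInducedPathList G (m ++ [z]) := by
  obtain ⟨hne, hnd, hiff⟩ := hm
  refine ⟨by simp, by simp [List.nodup_append, hnd, hz]; exact fun a ha h => hz (h ▸ ha), ?_⟩
  intro i j hi hj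
  simp only [List.get_eq_getElem]
  have hi' : i < m.length + 1 := by simpa using hi
  have hj' : j < m.length + 1 := by simpa using hj
  rcases lt_or_ge i m.length with him | him <;> rcases lt_or_ge j m.length with hjm | hjm
  · rw [List.getElem_append_left him, List.getElem_append_left hjm]
    exact hiff i j him hjm
  · have hj'' : j = m.length := by omega
    rw [List.getElem_append_left him, List.getElem_concat_length hj'']
    rw [hadj i him]
    omega
  · have hi'' : i = m.length := by omega
    rw [List.getElem_append_left hjm, List.getElem_concat_length hi'']
    rw [G.adj_comm, hadj j hjm]
    omega
  · have hi'' : i = m.length := by omega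
    have hj'' : j = m.length := by omega
    rw [List.getElem_concat_length hi'', List.getElem_concat_length hj'']
    simp only [SimpleGraph.irrefl, false_iff]
    omega

end GyarfasAux

section GyarfasMain

variable {V : Type*} [Fintype V] {G : SimpleGraph V} {w : V → ℕ}

lemma comps_in_comp {b : ℕ} (hb : wsum w (Set.univ : Set V) ≤ 2 * b + 1) {T T' : Set V}
    (hsub : T' ⊆ T) {v : V} (hvbig : b < wsum w {u | ReachIn G T v u}) :
    ∀ v' ∈ T', wsum w {u | ReachIn G T' v' u} ≤ b ∨
      {u | ReachIn G T' v' u} ⊆ {u | ReachIn G T v u} := by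
  intro v' _
  by_cases hs : wsum w {u | ReachIn G T' v' u} ≤ b
  · exact Or.inl hs
  · right
    have hmono : {u | ReachIn G T' v' u} ⊆ {u | ReachIn G T v' u} :=
      fun u hu => reach_mono hsub hu
    have hbig' : b < wsum w {u | ReachIn G T v' u} :=
      lt_of_lt_of_le (not_le.mp hs) (wsum_mono hmono)
    rw [← big_comp_unique hb hvbig hbig']
    exact hmono

lemma gyA (G : SimpleGraph V) (w : V → ℕ) (b : ℕ)
    (hb : wsum w (Set.univ : Set V) ≤ 2 * b + 1) :
    ∀ n : ℕ, ∀ (m : List V) (x : V) (D : Set V),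
      D.ncard ≤ n →
      IsInducedPathList G (m ++ [x]) →
      (∀ d ∈ D, d ∉ closedNbhd G {v | v ∈ m}) →
      x ∉ D →
      (∃ d ∈ D, G.Adj x d) →
      (∀ a ∈ D, ∀ c ∈ D, ReachIn G D a c) →
      (∀ v ∈ Set.univ \ closedNbhd G {u | u ∈ m ++ [x]},
        wsum w {u | ReachIn G (Set.univ \ closedNbhd G {u | u ∈ m ++ [x]}) v u} ≤ b ∨
        {u | ReachIn G (Set.univ \ closedNbhd G {u | u ∈ m ++ [x]}) v u} ⊆ D) →
      ∃ l, IsInducedPathList G l ∧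
        CompsSmall G w (Set.univ \ closedNbhd G {v | v ∈ l}) b := by
  intro n
  induction n with
  | zero =>
      intro m x D hcard hpath hDm hxD hadjD hconn hiii
      obtain ⟨d, hd, _⟩ := hadjD
      have hD0 : D = ∅ := (Set.ncard_eq_zero (Set.toFinite D)).mp (Nat.le_zero.mp hcard)
      exact absurd (hD0 ▸ hd) (Set.notMem_empty d)
  | succ n ih =>
      intro m x D hcard hpath hDm hxD hadjD hconn hiii
      by_cases hsmall : CompsSmall G w (Set.univ \ closedNbhd G {v | v ∈ m ++ [x]}) b
      · exact ⟨m ++ [x], hpath, hsmall⟩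
      unfold CompsSmall at hsmall
      push_neg at hsmall
      obtain ⟨v, hvT, hvbig⟩ := hsmall
      set T := Set.univ \ closedNbhd G {u | u ∈ m ++ [x]} with hTdef
      have hCD : {u | ReachIn G T v u} ⊆ D := (hiii v hvT).resolve_left (not_le.mpr hvbig)
      set C := {u | ReachIn G T v u} with hCdef
      have hCT : C ⊆ T := fun u hu => reach_mem hvT hu
      obtain ⟨d, hdD, hxd⟩ := hadjD
      have hdC : d ∉ C := by
        intro hdc
        exact (hCT hdc).2 (Or.inr ⟨x, by simp, hxd⟩)
      have hvC : v ∈ C := Relation.ReflTransGen.refl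
      obtain ⟨a, z, haC, hzC, hza⟩ := crossing (hconn v (hCD hvC) d hdD) hvC hdC
      obtain ⟨haz, haD, hzD⟩ := hza
      have hzT : z ∉ T := fun hzT =>
        hzC (Relation.ReflTransGen.tail (show ReachIn G T v a from haC) ⟨haz, hCT haC, hzT⟩)
      have hzN : z ∈ closedNbhd G {u | u ∈ m ++ [x]} := by
        by_contra hc
        exact hzT ⟨Set.mem_univ z, hc⟩
      have hzm : z ∉ closedNbhd G {v | v ∈ m} := hDm z hzD
      have hzx : z ≠ x := fun h => hxD (h ▸ hzD)
      have hznm : z ∉ m := fun h => hzm (Or.inl h)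
      have hznotmem : z ∉ m ++ [x] := by simp [hznm, hzx]
      have hadjxz : G.Adj x z := by
        rcases hzN with hmem | ⟨s, hs, hsz⟩
        · exact absurd hmem hznotmem
        · rcases List.mem_append.mp hs with hsm | hsx
          · exact absurd (Or.inr ⟨s, hsm, hsz⟩) hzm
          · have : s = x := by simpa using hsx
            exact this ▸ hsz
      have hpath' : IsInducedPathList G ((m ++ [x]) ++ [z]) := by
        apply induced_path_append hpath hznotmem
        intro i hi
        simp only [List.length_append, List.length_singleton] at hi ⊢
        rcases lt_or_ge i m.length with him | him
        · rw [List.getElem_append_left him]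
          constructor
          · intro h; exact absurd (Or.inr ⟨m[i], List.getElem_mem _, h⟩) hzm
          · omega
        · have hi' : i = m.length := by omega
          rw [List.getElem_concat_length hi']
          constructor
          · intro _; omega
          · intro _; exact hadjxz
      have hCcard : C.ncard ≤ n := by
        have hlt : C.ncard < D.ncard :=
          Set.ncard_lt_ncard ⟨hCD, fun hDC => hzC (hDC hzD)⟩ (Set.toFinite D)
        omega
      apply ih (m ++ [x]) z C hCcard hpath'
      · exact fun d' hd' => (hCT hd').2
      · exact hzC
      · exact ⟨a, haC, haz.symm⟩
      · intro a1 h1 c1 h2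
        have r1 : ReachIn G C v a1 := reach_comp h1
        have r2 : ReachIn G C v c1 := reach_comp h2
        exact reach_trans (reach_symm r1) r2
      · rw [hCdef]
        rw [hCdef] at hvbig
        apply comps_in_comp hb _ hvbig
        apply Set.diff_subset_diff_right
        apply closedNbhd_mono
        intro u hu
        simp only [Set.mem_setOf_eq, List.mem_append] at hu ⊢
        tauto

end GyarfasMain

/-- the Gyárfás path argument. -/
theorem gyarfas_path {V : Type*} [Fintype V] [Nonempty V]
    (G : SimpleGraph V) (w : V → ℕ) :
    ∃ l : List V, IsInducedPathList G l ∧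
      CompsSmall G w (Set.univ \ closedNbhd G {v | v ∈ l}) (wsum w Set.univ / 2) := by
  classical
  set b := wsum w (Set.univ : Set V) / 2 with hbdef
  have hb : wsum w (Set.univ : Set V) ≤ 2 * b + 1 := by omega
  -- first attempt from an arbitrary vertex
  obtain ⟨a₀⟩ := ‹Nonempty V›
  by_cases h1 : CompsSmall G w (Set.univ \ closedNbhd G {v | v ∈ [a₀]}) b
  · exact ⟨[a₀], single_path a₀, h1⟩
  unfold CompsSmall at h1
  push_neg at h1
  obtain ⟨v₀, hv₀T, hv₀big⟩ := h1
  -- restart from v₀, which lies in a heavy connected region of G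
  have hKv₀ : b < wsum w {u | ReachIn G (Set.univ : Set V) v₀ u} := by
    refine lt_of_lt_of_le hv₀big (wsum_mono ?_)
    exact fun u hu => reach_mono (Set.subset_univ _) hu
  by_cases h2 : CompsSmall G w (Set.univ \ closedNbhd G {v | v ∈ [v₀]}) b
  · exact ⟨[v₀], single_path v₀, h2⟩
  unfold CompsSmall at h2
  push_neg at h2
  obtain ⟨u, huT, hubig⟩ := h2
  set T0 := Set.univ \ closedNbhd G {v | v ∈ [v₀]} with hT0def
  set C := {p | ReachIn G T0 u p} with hCdef
  have hCT0 : C ⊆ T0 := fun p hp => reach_mem huT hp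
  -- u and v₀ are in the same component of G
  have hKu : b < wsum w {p | ReachIn G (Set.univ : Set V) u p} := by
    refine lt_of_lt_of_le hubig (wsum_mono ?_)
    exact fun p hp => reach_mono (Set.subset_univ _) hp
  have hKeq : {p | ReachIn G (Set.univ : Set V) u p}
      = {p | ReachIn G (Set.univ : Set V) v₀ p} := big_comp_unique hb hKv₀ hKu
  have hreach : ReachIn G (Set.univ : Set V) u v₀ := by
    have hv₀mem : v₀ ∈ {p | ReachIn G (Set.univ : Set V) v₀ p} := Relation.ReflTransGen.refl
    rw [← hKeq] at hv₀mem
    exact hv₀mem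
  have huC : u ∈ C := Relation.ReflTransGen.refl
  have hv₀C : v₀ ∉ C := by
    intro hc
    exact (hCT0 hc).2 (Or.inl (by simp))
  obtain ⟨a, z, haC, hzC, hza⟩ := crossing hreach huC hv₀C
  have haz : G.Adj a z := hza.1
  have hzT : z ∉ T0 := fun hzT =>
    hzC (Relation.ReflTransGen.tail (show ReachIn G T0 u a from haC) ⟨haz, hCT0 haC, hzT⟩)
  have hzN : z ∈ closedNbhd G {v | v ∈ [v₀]} := by
    by_contra hc
    exact hzT ⟨Set.mem_univ z, hc⟩
  have hzne : z ≠ v₀ := by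
    intro h
    subst h
    exact (hCT0 haC).2 (Or.inr ⟨z, by simp, haz.symm⟩)
  have hadjv₀z : G.Adj v₀ z := by
    rcases hzN with hmem | ⟨s, hs, hsz⟩
    · exact absurd (by simpa using hmem) hzne
    · have : s = v₀ := by simpa using hs
      exact this ▸ hsz
  have hpath : IsInducedPathList G ([v₀] ++ [z]) := by
    apply induced_path_append (single_path v₀) (by simp [hzne])
    intro i hi
    simp only [List.length_singleton] at hi ⊢
    have : i = 0 := by omega
    subst this
    simpa using hadjv₀z
  refine gyA G w b hb C.ncard [v₀] z C le_rfl hpath ?_ ?_ ?_ ?_ ?_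
  · exact fun d hd => (hCT0 hd).2
  · exact hzC
  · exact ⟨a, haC, haz.symm⟩
  · intro a1 h1 c1 h2
    have r1 : ReachIn G C u a1 := reach_comp h1
    have r2 : ReachIn G C u c1 := reach_comp h2
    exact reach_trans (reach_symm r1) r2
  · rw [hCdef]
    rw [hCdef] at hubig
    apply comps_in_comp hb _ hubig
    apply Set.diff_subset_diff_right
    apply closedNbhd_mono
    intro p hp
    simp only [Set.mem_setOf_eq, List.mem_append] at hp ⊢
    tauto
end

section
/- Let (H, η) be a rigid extended strip decomposition of a graph G and let A = A_{xy}^{xy} be a full edge particle for an edge xy of H. Then there exists a set X_A ⊆ V(G) with |X_A| ≤ 2 such that N_G(A) ⊆ N_G(X_A). -/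
private lemma ESD.eta_t_perm_eq {V : Type*} {H' : Type*} {G : SimpleGraph V}
    {H : SimpleGraph H'} (D : ESD G H)
    {x y z p q r : H'} (hxy : x ≠ y) (hyz : y ≠ z) (hxz : x ≠ z)
    (hx : x = p ∨ x = q ∨ x = r) (hy : y = p ∨ y = q ∨ y = r)
    (hz : z = p ∨ z = q ∨ z = r) :
    D.ηt x y z = D.ηt p q r := by
  have s12 := D.ηt_symm12
  have s23 := D.ηt_symm23
  rcases hx with rfl | rfl | rfl <;> rcases hy with rfl | rfl | rfl <;>
    rcases hz with rfl | rfl | rfl <;>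
    first
      | exact absurd rfl hxy
      | exact absurd rfl hyz
      | exact absurd rfl hxz
      | rfl
      | exact s12 _ _ _
      | exact s23 _ _ _
      | exact (s23 _ _ _).trans (s12 _ _ _)
      | exact (s12 _ _ _).trans (s23 _ _ _)
      | exact ((s12 _ _ _).trans (s23 _ _ _)).trans (s12 _ _ _)

/-- the neighborhood of a full edge particle of a rigid extended strip
decomposition is dominated by at most two vertices. -/
theorem full_edge_particle_dominated {V : Type*} {H' : Type*}
    (G : SimpleGraph V) (H : SimpleGraph H') (D : ESD G H) (hD : D.IsRigid)
    (p q : H') (hpq : H.Adj p q) :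
    ∃ X : Finset V, X.card ≤ 2 ∧
      openNbhd G (D.fullEdge p q) ⊆ openNbhd G (↑X : Set V) := by
  classical
  obtain ⟨hri, -⟩ := hD
  obtain ⟨a, ha⟩ := hri p q hpq
  obtain ⟨b, hb⟩ := hri q p hpq.symm
  -- membership helpers for the full edge particle
  have memA_vp : ∀ {u : V}, u ∈ D.ηv p → u ∈ D.fullEdge p q :=
    fun h => Or.inl (Or.inl (Or.inl h))
  have memA_vq : ∀ {u : V}, u ∈ D.ηv q → u ∈ D.fullEdge p q :=
    fun h => Or.inl (Or.inl (Or.inr h))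
  have memA_e : ∀ {u : V}, u ∈ D.ηe p q → u ∈ D.fullEdge p q :=
    fun h => Or.inl (Or.inr h)
  have memA_t : ∀ {u : V} {r : H'}, u ∈ D.ηt p q r → u ∈ D.fullEdge p q :=
    fun {u r} h => Or.inr ⟨r, h⟩
  have haA : a ∈ D.fullEdge p q := memA_e (D.ηi_sub p q ha)
  have hbA : b ∈ D.fullEdge p q := memA_e (D.ηe_symm q p ▸ D.ηi_sub q p hb)
  -- classification of members of the full edge particle
  have hAe : ∀ {s : V} {x y : H'}, s ∈ D.fullEdge p q → s ∈ D.ηe x y →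
      (x = p ∧ y = q) ∨ (x = q ∧ y = p) := by
    intro s x y hsA hse
    rcases hsA with ((h | h) | h) | ⟨r, h⟩
    · exact (Set.eq_empty_iff_forall_notMem.mp (D.disj_ve p x y) s ⟨h, hse⟩).elim
    · exact (Set.eq_empty_iff_forall_notMem.mp (D.disj_ve q x y) s ⟨h, hse⟩).elim
    · by_contra hc
      rw [not_or] at hc
      exact (Set.eq_empty_iff_forall_notMem.mp
        (D.disj_ee x y p q hc.1 hc.2) s ⟨hse, h⟩).elim
    · exact (Set.eq_empty_iff_forall_notMem.mp (D.disj_et x y p q r) s ⟨hse, h⟩).elim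
  have hAv : ∀ {s : V} {x : H'}, s ∈ D.fullEdge p q → s ∈ D.ηv x →
      x = p ∨ x = q := by
    intro s x hsA hsv
    rcases hsA with ((h | h) | h) | ⟨r, h⟩
    · left
      by_contra hne
      exact (Set.eq_empty_iff_forall_notMem.mp (D.disj_vv x p hne) s ⟨hsv, h⟩).elim
    · right
      by_contra hne
      exact (Set.eq_empty_iff_forall_notMem.mp (D.disj_vv x q hne) s ⟨hsv, h⟩).elim
    · exact (Set.eq_empty_iff_forall_notMem.mp (D.disj_ve x p q) s ⟨hsv, h⟩).elim
    · exact (Set.eq_empty_iff_forall_notMem.mp (D.disj_vt x p q r) s ⟨hsv, h⟩).elim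
  have hAt : ∀ {s : V} {x y z : H'}, s ∈ D.fullEdge p q → s ∈ D.ηt x y z →
      ∃ r, s ∈ D.ηt p q r ∧ ({x, y, z} : Set H') = {p, q, r} := by
    intro s x y z hsA hst
    rcases hsA with ((h | h) | h) | ⟨r, h⟩
    · exact (Set.eq_empty_iff_forall_notMem.mp (D.disj_vt p x y z) s ⟨h, hst⟩).elim
    · exact (Set.eq_empty_iff_forall_notMem.mp (D.disj_vt q x y z) s ⟨h, hst⟩).elim
    · exact (Set.eq_empty_iff_forall_notMem.mp (D.disj_et p q x y z) s ⟨h, hst⟩).elim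
    · refine ⟨r, h, ?_⟩
      by_contra hne
      exact (Set.eq_empty_iff_forall_notMem.mp
        (D.disj_tt x y z p q r hne) s ⟨hst, h⟩).elim
  have hTri : ∀ {s : V} {x y z : H'}, s ∈ D.ηt x y z → Tri H x y z := by
    intro s x y z hst
    by_contra h
    rw [D.ηt_empty x y z h] at hst
    exact hst
  refine ⟨{a, b}, ?_, ?_⟩
  · exact (Finset.card_insert_le _ _).trans (by simp)
  intro v hv
  obtain ⟨hvA, s, hsA, hadj⟩ := hv
  suffices hor : G.Adj a v ∨ G.Adj b v by
    refine ⟨?_, ?_⟩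
    · intro hmem
      have : v = a ∨ v = b := by simpa using hmem
      rcases this with rfl | rfl
      · exact hvA haA
      · exact hvA hbA
    · rcases hor with h | h
      · exact ⟨a, by simp, h⟩
      · exact ⟨b, by simp, h⟩
  rcases D.edge_cond s v hadj with
      ⟨x, hsx, hvx⟩ | ⟨x, y, hsxy, hvxy⟩ | ⟨x, y, z, hsxyz, hvxyz⟩ |
      ⟨x, y, z, hxy, hxz, hyz, hcase⟩ | ⟨x, y, hxy, hcase⟩ | ⟨x, y, z, htri, hcase⟩
  · rcases hAv hsA hsx with hx | hx
    · exact absurd (memA_vp (hx ▸ hvx)) hvA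
    · exact absurd (memA_vq (hx ▸ hvx)) hvA
  · rcases hAe hsA hsxy with ⟨hx, hy⟩ | ⟨hx, hy⟩
    · exact absurd (memA_e (hx ▸ hy ▸ hvxy)) hvA
    · exact absurd (memA_e (D.ηe_symm q p ▸ hx ▸ hy ▸ hvxy)) hvA
  · obtain ⟨r, hspr, hset⟩ := hAt hsA hsxyz
    have htri' := hTri hsxyz
    have hmem : ∀ w : H', w ∈ ({x, y, z} : Set H') → (w = p ∨ w = q ∨ w = r) := by
      intro w hw
      have : w ∈ ({p, q, r} : Set H') := hset ▸ hw
      simpa using this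
    have heq : D.ηt x y z = D.ηt p q r :=
      D.eta_t_perm_eq htri'.1.ne htri'.2.1.ne htri'.2.2.ne
        (hmem x (by simp)) (hmem y (by simp)) (hmem z (by simp))
    exact absurd (memA_t (heq ▸ hvxyz)) hvA
  · rcases hcase with ⟨hs1, hv1⟩ | ⟨hv1, hs1⟩
    · rcases hAe hsA (D.ηi_sub x y hs1) with ⟨hx, hy⟩ | ⟨hx, hy⟩
      · exact Or.inl (D.complete p q z hpq (hx ▸ hxz) (hy ▸ hyz) a ha v (hx ▸ hv1))
      · exact Or.inr (D.complete q p z hpq.symm (hx ▸ hxz) (hy ▸ hyz) b hb v (hx ▸ hv1))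
    · rcases hAe hsA (D.ηi_sub x z hs1) with ⟨hx, hz⟩ | ⟨hx, hz⟩
      · exact Or.inl (D.complete p q y hpq (hx ▸ hxy) (Ne.symm (hz ▸ hyz)) a ha v (hx ▸ hv1))
      · exact Or.inr (D.complete q p y hpq.symm (hx ▸ hxy) (Ne.symm (hz ▸ hyz)) b hb v (hx ▸ hv1))
  · rcases hcase with ⟨hs1, hv1⟩ | ⟨hv1, hs1⟩
    · rcases hAe hsA (D.ηi_sub x y hs1) with ⟨hx, hy⟩ | ⟨hx, hy⟩
      · exact absurd (memA_vp (hx ▸ hv1)) hvA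
      · exact absurd (memA_vq (hx ▸ hv1)) hvA
    · rcases hAv hsA hs1 with hx | hx
      · by_cases hyq : y = q
        · exact absurd (memA_e (D.ηi_sub p q (hx ▸ hyq ▸ hv1))) hvA
        · exact Or.inl (D.complete p q y hpq (hx ▸ hxy) (Ne.symm hyq) a ha v (hx ▸ hv1))
      · by_cases hyp : y = p
        · exact absurd (memA_e (D.ηe_symm q p ▸ D.ηi_sub q p (hx ▸ hyp ▸ hv1))) hvA
        · exact Or.inr (D.complete q p y hpq.symm (hx ▸ hxy) (Ne.symm hyp) b hb v (hx ▸ hv1))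
  · rcases hcase with ⟨hs1, hv1⟩ | ⟨hv1, hs1⟩
    · obtain ⟨r, hspr, hset⟩ := hAt hsA hs1
      have htriX := hTri hs1
      have htriP := hTri hspr
      have hmem : ∀ w : H', w ∈ ({x, y, z} : Set H') → (w = p ∨ w = q ∨ w = r) := by
        intro w hw
        have : w ∈ ({p, q, r} : Set H') := hset ▸ hw
        simpa using this
      rcases hmem x (by simp) with hx | hx | hx <;> rcases hmem y (by simp) with hy | hy | hy
      · exact absurd (hx.trans hy.symm) htriX.1.ne
      · exact absurd (memA_e (D.ηi_sub p q (hx ▸ hy ▸ hv1.1))) hvA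
      · exact Or.inl (D.complete p q r hpq (hx ▸ hy ▸ htriX.1) htriP.2.1.ne a ha v
          (hx ▸ hy ▸ hv1.1))
      · exact absurd (memA_e (D.ηi_sub p q (hy ▸ hx ▸ hv1.2))) hvA
      · exact absurd (hx.trans hy.symm) htriX.1.ne
      · exact Or.inr (D.complete q p r hpq.symm (hx ▸ hy ▸ htriX.1) htriP.2.2.ne b hb v
          (hx ▸ hy ▸ hv1.1))
      · exact Or.inl (D.complete p q r hpq (hy ▸ hx ▸ htriX.1.symm) htriP.2.1.ne a ha v
          (hy ▸ hx ▸ hv1.2))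
      · exact Or.inr (D.complete q p r hpq.symm (hy ▸ hx ▸ htriX.1.symm) htriP.2.2.ne b hb v
          (hy ▸ hx ▸ hv1.2))
      · exact absurd (hx.trans hy.symm) htriX.1.ne
    · rcases hAe hsA (D.ηi_sub x y hs1.1) with ⟨hx, hy⟩ | ⟨hx, hy⟩
      · exact absurd (memA_t (hx ▸ hy ▸ hv1)) hvA
      · exact absurd (memA_t (D.ηt_symm12 q p z ▸ hx ▸ hy ▸ hv1)) hvA
end

section
/- Let (H, η) be an extended strip decomposition of a graph G and let Q = (x₀, x₁, …, x_k) be an induced path in G whose endpoints x₀ and x_k are peripheral in (H, η). If x_i ∈ η(v) for some vertex v ∈ V(H) and index i, then there exist indices p < i < q and an edge e of H incident to v such that x_p ∈ η(e, v) and x_q ∈ η(e, v). -/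
section Aux

variable {V : Type*} {H' : Type*} {G : SimpleGraph V} {H : SimpleGraph H'}

/-- A neighbor outside `η(v)` of a vertex of `η(v)` lies in some interface `η(ve, v)`. -/
lemma ESD.adj_interface (D : ESD G H) {v : H'} {x y : V}
    (hx : x ∈ D.ηv v) (hy : y ∉ D.ηv v) (hadj : G.Adj x y) :
    ∃ e, H.Adj v e ∧ y ∈ D.ηi v e := by
  have hve : ∀ a b, x ∉ D.ηe a b := by
    intro a b hxe
    have h0 : x ∈ D.ηv v ∩ D.ηe a b := ⟨hx, hxe⟩
    rw [D.disj_ve] at h0; exact h0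
  have hvt : ∀ a b c, x ∉ D.ηt a b c := by
    intro a b c hxt
    have h0 : x ∈ D.ηv v ∩ D.ηt a b c := ⟨hx, hxt⟩
    rw [D.disj_vt] at h0; exact h0
  have hvv : ∀ a, x ∈ D.ηv a → a = v := by
    intro a ha
    by_contra hav
    have h0 : x ∈ D.ηv a ∩ D.ηv v := ⟨ha, hx⟩
    rw [D.disj_vv a v hav] at h0; exact h0
  rcases D.edge_cond x y hadj with ⟨a, hxa, hya⟩ | ⟨a, b, hxe, _⟩ | ⟨a, b, c, hxt, _⟩ |
    ⟨a, b, c, _, _, _, hc⟩ | ⟨a, b, hab, hc⟩ | ⟨a, b, c, _, hc⟩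
  · exact absurd (hvv a hxa ▸ hya) hy
  · exact absurd hxe (hve a b)
  · exact absurd hxt (hvt a b c)
  · rcases hc with ⟨hxi, _⟩ | ⟨_, hxi⟩ <;>
      [exact absurd (D.ηi_sub a b hxi) (hve a b);
       exact absurd (D.ηi_sub a c hxi) (hve a c)]
  · rcases hc with ⟨hxi, _⟩ | ⟨hyi, hxa⟩
    · exact absurd (D.ηi_sub a b hxi) (hve a b)
    · exact ⟨b, hvv a hxa ▸ hab, hvv a hxa ▸ hyi⟩
  · rcases hc with ⟨hxt, _⟩ | ⟨_, hxi⟩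
    · exact absurd hxt (hvt a b c)
    · exact absurd (D.ηi_sub a b hxi.1) (hve a b)

lemma ESD.Peripheral.not_mem_ηv (D : ESD G H) {z : V} (hz : D.Peripheral z) (v : H') :
    z ∉ D.ηv v := by
  obtain ⟨a, b, _, _, hi, _⟩ := hz
  intro hzv
  have hze : z ∈ D.ηe a b := D.ηi_sub a b (hi ▸ (Set.mem_singleton z))
  have h0 : z ∈ D.ηv v ∩ D.ηe a b := ⟨hzv, hze⟩
  rw [D.disj_ve] at h0; exact h0

end Aux

/-- if an induced path between peripheral vertices meets a vertex set
`η(v)`, it enters and leaves through the same interface `η(e, v)`. -/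
theorem path_through_vertex_set {V : Type*} {H' : Type*}
    (G : SimpleGraph V) (H : SimpleGraph H') (D : ESD G H)
    (l : List V) (hl : IsInducedPathList G l) (hne : l ≠ [])
    (hx : D.Peripheral (l.head hne)) (hy : D.Peripheral (l.getLast hne)) :
    ∀ (i : ℕ) (hi : i < l.length) (v : H'), l.get ⟨i, hi⟩ ∈ D.ηv v →
      ∃ (p q : ℕ) (hp : p < l.length) (hq : q < l.length) (e : H'),
        p < i ∧ i < q ∧ H.Adj v e ∧
        l.get ⟨p, hp⟩ ∈ D.ηi v e ∧ l.get ⟨q, hq⟩ ∈ D.ηi v e := by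
  classical
  intro i hi v hv
  obtain ⟨_, _, hiff⟩ := hl
  set n := l.length with hn
  set P : ℕ → Prop := fun j => ∃ hj : j < n, l.get ⟨j, hj⟩ ∈ D.ηv v with hP
  have hn0 : 0 < n := lt_of_le_of_lt (Nat.zero_le i) hi
  have hPi : P i := ⟨hi, hv⟩
  -- endpoints are not in η(v)
  have hP0 : ¬ P 0 := by
    rintro ⟨h0, hmem⟩
    have : l.head hne = l.get ⟨0, h0⟩ := by simp [List.head_eq_getElem]
    exact hx.not_mem_ηv D v (this ▸ hmem)
  have hPlast : ¬ P (n - 1) := by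
    rintro ⟨h0, hmem⟩
    have : l.getLast hne = l.get ⟨n - 1, h0⟩ := by simp [List.getLast_eq_getElem, hn]
    exact hy.not_mem_ηv D v (this ▸ hmem)
  have hi0 : 0 < i := by
    rcases Nat.eq_zero_or_pos i with h | h
    · exact absurd (h ▸ hPi) hP0
    · exact h
  have hilast : i < n - 1 := by
    have hle : i ≤ n - 1 := Nat.le_pred_of_lt hi
    rcases hle.lt_or_eq with h | h
    · exact h
    · exact absurd (h ▸ hPi) hPlast
  -- choose p : the greatest index ≤ i with ¬ P
  set p := Nat.findGreatest (fun j => ¬ P j) i with hp_def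
  have hpspec : ¬ P p := Nat.findGreatest_spec (P := fun j => ¬ P j) (Nat.zero_le i) hP0
  have hple : p ≤ i := Nat.findGreatest_le i
  have hpi : p < i := hple.lt_of_ne (fun h => hpspec (h ▸ hPi))
  have hPbetween : ∀ m, p < m → m ≤ i → P m := by
    intro m h1 h2
    by_contra hm
    exact Nat.findGreatest_is_greatest h1 h2 hm
  -- choose q : the least index > i with ¬ P
  have hQex : ∃ j, i < j ∧ j < n ∧ ¬ P j :=
    ⟨n - 1, hilast, Nat.pred_lt hn0.ne', hPlast⟩
  set q := Nat.find hQex with hq_def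
  obtain ⟨hiq, hqn, hqspec⟩ := Nat.find_spec hQex
  have hQbetween : ∀ m, i ≤ m → m < q → P m := by
    intro m h1 h2
    rcases h1.lt_or_eq with h | h
    · by_contra hm
      exact Nat.find_min hQex h2 ⟨h, lt_trans h2 hqn, hm⟩
    · exact h ▸ hPi
  have hp_lt_n : p < n := lt_trans hpi hi
  -- x_{p+1} ∈ η(v) and adjacency
  obtain ⟨hp1n, hp1mem⟩ := hPbetween (p + 1) (Nat.lt_succ_self p) (by omega)
  obtain ⟨hq1n, hq1mem⟩ := hQbetween (q - 1) (by omega) (by omega)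
  have hpnot : l.get ⟨p, hp_lt_n⟩ ∉ D.ηv v := fun h => hpspec ⟨hp_lt_n, h⟩
  have hqnot : l.get ⟨q, hqn⟩ ∉ D.ηv v := fun h => hqspec ⟨hqn, h⟩
  have hadjp : G.Adj (l.get ⟨p + 1, hp1n⟩) (l.get ⟨p, hp_lt_n⟩) :=
    (hiff (p + 1) p hp1n hp_lt_n).mpr (Or.inr rfl)
  have hadjq : G.Adj (l.get ⟨q - 1, hq1n⟩) (l.get ⟨q, hqn⟩) :=
    (hiff (q - 1) q hq1n hqn).mpr (Or.inl (by omega))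
  obtain ⟨e1, he1, hpe1⟩ := D.adj_interface hp1mem hpnot hadjp
  obtain ⟨e2, he2, hqe2⟩ := D.adj_interface hq1mem hqnot hadjq
  have heq : e1 = e2 := by
    by_contra hne'
    have hadjpq : G.Adj (l.get ⟨p, hp_lt_n⟩) (l.get ⟨q, hqn⟩) :=
      D.complete v e1 e2 he1 he2 hne' _ hpe1 _ hqe2
    have := (hiff p q hp_lt_n hqn).mp hadjpq
    omega
  exact ⟨p, q, hp_lt_n, hqn, e1, hpi, hiq, he1, hpe1, heq ▸ hqe2⟩
end

section
/- Let (H, η) be an extended strip decomposition of a graph G and let Q be an induced path in G between two distinct peripheral vertices. Then for every edge e = ab of H, |V(Q) ∩ η(e, a)| ≤ 1, and moreover V(Q) ⊆ ⋃_{e ∈ E(H)} η(e). -/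
section ESDPathAux

variable {V : Type*} {H' : Type*} {G : SimpleGraph V} {H : SimpleGraph H'}

private lemma not_mem_both {v : V} {A B : Set V} (h : A ∩ B = ∅) (ha : v ∈ A) (hb : v ∈ B) :
    False := by
  have hv : v ∈ A ∩ B := ⟨ha, hb⟩
  rw [h] at hv
  exact hv

namespace ESD

variable (D : ESD G H)

private lemma adj_of_e' {v : V} {a b : H'} (h : v ∈ D.ηe a b) : H.Adj a b := by
  by_contra hcon
  rw [D.ηe_empty a b hcon] at h
  exact h

private lemma adj_of_i' {v : V} {a b : H'} (h : v ∈ D.ηi a b) : H.Adj a b :=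
  D.adj_of_e' (D.ηi_sub a b h)

private lemma compl' {u w : V} {x y z : H'} (hu : u ∈ D.ηi x y) (hw : w ∈ D.ηi x z)
    (hyz : y ≠ z) : G.Adj u w :=
  D.complete x y z (D.adj_of_i' hu) (D.adj_of_i' hw) hyz u hu w hw

private lemma e_eq' {v : V} {a b x y : H'} (h1 : v ∈ D.ηe a b) (h2 : v ∈ D.ηe x y) :
    (x = a ∧ y = b) ∨ (x = b ∧ y = a) := by
  by_contra h
  rw [not_or] at h
  exact not_mem_both (D.disj_ee x y a b h.1 h.2) h2 h1

private lemma t_eq' {v : V} {x y z d e f : H'} (h1 : v ∈ D.ηt x y z) (h2 : v ∈ D.ηt d e f) :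
    ({x, y, z} : Set H') = {d, e, f} := by
  by_contra h
  exact not_mem_both (D.disj_tt x y z d e f h) h1 h2

private lemma nbr_v' {u v : V} {x : H'} (hu : u ∈ D.ηv x) (huv : G.Adj u v) :
    v ∈ D.ηv x ∨ ∃ y, H.Adj x y ∧ v ∈ D.ηi x y := by
  rcases D.edge_cond u v huv with ⟨x', h1, h2⟩ | ⟨a, b, h1, h2⟩ | ⟨a, b, c, h1, h2⟩ |
    ⟨a, b, c, hab, hac, hbc, hor⟩ | ⟨a, b, hab, hor⟩ | ⟨a, b, c, htri, hor⟩
  · have hxx : x' = x := by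
      by_contra hne
      exact not_mem_both (D.disj_vv x' x hne) h1 hu
    exact Or.inl (hxx ▸ h2)
  · exact (not_mem_both (D.disj_ve x a b) hu h1).elim
  · exact (not_mem_both (D.disj_vt x a b c) hu h1).elim
  · rcases hor with ⟨h1, h2⟩ | ⟨h1, h2⟩
    · exact (not_mem_both (D.disj_ve x a b) hu (D.ηi_sub a b h1)).elim
    · exact (not_mem_both (D.disj_ve x a c) hu (D.ηi_sub a c h2)).elim
  · rcases hor with ⟨h1, h2⟩ | ⟨h1, h2⟩
    · exact (not_mem_both (D.disj_ve x a b) hu (D.ηi_sub a b h1)).elim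
    · have hax : a = x := by
        by_contra hne
        exact not_mem_both (D.disj_vv a x hne) h2 hu
      subst hax
      exact Or.inr ⟨b, hab, h1⟩
  · rcases hor with ⟨h1, h2⟩ | ⟨h1, h2⟩
    · exact (not_mem_both (D.disj_vt x a b c) hu h1).elim
    · exact (not_mem_both (D.disj_ve x a b) hu (D.ηi_sub a b h2.1)).elim

private lemma nbr_t' {u v : V} {x y z : H'} (hu : u ∈ D.ηt x y z) (huv : G.Adj u v) :
    (∃ x' y' z', v ∈ D.ηt x' y' z' ∧ ({x', y', z'} : Set H') = {x, y, z}) ∨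
    (∃ x' y' z', Tri H x' y' z' ∧ ({x', y', z'} : Set H') = {x, y, z} ∧
      v ∈ D.ηi x' y' ∩ D.ηi y' x') := by
  rcases D.edge_cond u v huv with ⟨x', h1, h2⟩ | ⟨a, b, h1, h2⟩ | ⟨a, b, c, h1, h2⟩ |
    ⟨a, b, c, hab, hac, hbc, hor⟩ | ⟨a, b, hab, hor⟩ | ⟨a, b, c, htri, hor⟩
  · exact (not_mem_both (D.disj_vt x' x y z) h1 hu).elim
  · exact (not_mem_both (D.disj_et a b x y z) h1 hu).elim
  · exact Or.inl ⟨a, b, c, h2, D.t_eq' h1 hu⟩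
  · rcases hor with ⟨h1, h2⟩ | ⟨h1, h2⟩
    · exact (not_mem_both (D.disj_et a b x y z) (D.ηi_sub a b h1) hu).elim
    · exact (not_mem_both (D.disj_et a c x y z) (D.ηi_sub a c h2) hu).elim
  · rcases hor with ⟨h1, h2⟩ | ⟨h1, h2⟩
    · exact (not_mem_both (D.disj_et a b x y z) (D.ηi_sub a b h1) hu).elim
    · exact (not_mem_both (D.disj_vt a x y z) h2 hu).elim
  · rcases hor with ⟨h1, h2⟩ | ⟨h1, h2⟩
    · exact Or.inr ⟨a, b, c, htri, D.t_eq' h1 hu, h2⟩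
    · exact (not_mem_both (D.disj_et a b x y z) (D.ηi_sub a b h2.1) hu).elim

private lemma nbr_e' {u v : V} {a b : H'} (hu : u ∈ D.ηe a b) (huv : G.Adj u v) :
    v ∈ D.ηe a b ∨
    (∃ w, H.Adj a w ∧ w ≠ b ∧ u ∈ D.ηi a b ∧ v ∈ D.ηi a w) ∨
    (∃ w, H.Adj b w ∧ w ≠ a ∧ u ∈ D.ηi b a ∧ v ∈ D.ηi b w) ∨
    (u ∈ D.ηi a b ∧ v ∈ D.ηv a) ∨
    (u ∈ D.ηi b a ∧ v ∈ D.ηv b) ∨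
    (u ∈ D.ηi a b ∧ u ∈ D.ηi b a ∧
      ∃ x y z, v ∈ D.ηt x y z ∧ a ∈ ({x, y, z} : Set H') ∧ b ∈ ({x, y, z} : Set H')) := by
  rcases D.edge_cond u v huv with ⟨x', h1, h2⟩ | ⟨x, y, h1, h2⟩ | ⟨x, y, z, h1, h2⟩ |
    ⟨x, y, z, hxy, hxz, hyz, hor⟩ | ⟨x, y, hxy, hor⟩ | ⟨x, y, z, htri, hor⟩
  · exact (not_mem_both (D.disj_ve x' a b) h1 hu).elim
  · rcases D.e_eq' hu h1 with ⟨rfl, rfl⟩ | ⟨rfl, rfl⟩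
    · exact Or.inl h2
    · exact Or.inl (by rw [D.ηe_symm] at h2; exact h2)
  · exact (not_mem_both (D.disj_et a b x y z) hu h1).elim
  · rcases hor with ⟨h1, h2⟩ | ⟨h1, h2⟩
    · rcases D.e_eq' hu (D.ηi_sub x y h1) with ⟨rfl, rfl⟩ | ⟨rfl, rfl⟩
      · exact Or.inr (Or.inl ⟨z, hxz, Ne.symm hyz, h1, h2⟩)
      · exact Or.inr (Or.inr (Or.inl ⟨z, hxz, Ne.symm hyz, h1, h2⟩))
    · rcases D.e_eq' hu (D.ηi_sub x z h2) with ⟨rfl, rfl⟩ | ⟨rfl, rfl⟩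
      · exact Or.inr (Or.inl ⟨y, hxy, hyz, h2, h1⟩)
      · exact Or.inr (Or.inr (Or.inl ⟨y, hxy, hyz, h2, h1⟩))
  · rcases hor with ⟨h1, h2⟩ | ⟨h1, h2⟩
    · rcases D.e_eq' hu (D.ηi_sub x y h1) with ⟨rfl, rfl⟩ | ⟨rfl, rfl⟩
      · exact Or.inr (Or.inr (Or.inr (Or.inl ⟨h1, h2⟩)))
      · exact Or.inr (Or.inr (Or.inr (Or.inr (Or.inl ⟨h1, h2⟩))))
    · exact (not_mem_both (D.disj_ve x a b) h2 hu).elim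
  · rcases hor with ⟨h1, h2⟩ | ⟨h1, h2⟩
    · exact (not_mem_both (D.disj_et a b x y z) hu h1).elim
    · rcases D.e_eq' hu (D.ηi_sub x y h2.1) with ⟨rfl, rfl⟩ | ⟨rfl, rfl⟩
      · exact Or.inr (Or.inr (Or.inr (Or.inr (Or.inr
          ⟨h2.1, h2.2, _, _, _, h1, by simp, by simp⟩))))
      · exact Or.inr (Or.inr (Or.inr (Or.inr (Or.inr
          ⟨h2.2, h2.1, _, _, _, h1, by simp, by simp⟩))))

end ESD

end ESDPathAux
section ESDPathMain

variable {V : Type*} {H' : Type*} {G : SimpleGraph V} {H : SimpleGraph H'}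

private lemma seg_min (f : ℕ → V) (S : Set V) (t : ℕ) (ht : f t ∈ S) :
    ∃ r, r ≤ t ∧ (∀ u, r ≤ u → u ≤ t → f u ∈ S) ∧ (r = 0 ∨ ∃ r', r = r' + 1 ∧ f r' ∉ S) := by
  classical
  have hex : ∃ r, ∀ u, r ≤ u → u ≤ t → f u ∈ S :=
    ⟨t, fun u h1 h2 => by rwa [le_antisymm h2 h1]⟩
  set r := Nat.find hex with hr
  have hspec := Nat.find_spec hex
  refine ⟨r, Nat.find_min' hex (fun u h1 h2 => by rwa [le_antisymm h2 h1]), hspec, ?_⟩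
  rcases Nat.eq_zero_or_pos r with h0 | hpos
  · exact Or.inl h0
  · right
    refine ⟨r - 1, (Nat.succ_pred_eq_of_pos hpos).symm, ?_⟩
    have hmin := Nat.find_min hex (show r - 1 < r by omega)
    push_neg at hmin
    obtain ⟨u, hu1, hu2, hu3⟩ := hmin
    have hur : u = r - 1 := by
      by_contra hne
      exact hu3 (hspec u (by omega) hu2)
    rwa [hur] at hu3

private lemma seg_max (f : ℕ → V) (n : ℕ) (S : Set V) (t : ℕ) (htn : t < n) (ht : f t ∈ S) :
    ∃ s, t ≤ s ∧ s < n ∧ (∀ u, t ≤ u → u ≤ s → f u ∈ S) ∧ (s = n - 1 ∨ f (s + 1) ∉ S) := by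
  classical
  have hPt : ∀ u, t ≤ u → u ≤ t → f u ∈ S := fun u h1 h2 => by rwa [le_antisymm h2 h1]
  set s := Nat.findGreatest (fun s => ∀ u, t ≤ u → u ≤ s → f u ∈ S) (n - 1) with hsdef
  have hsb : s ≤ n - 1 := Nat.findGreatest_le (n - 1)
  have hts : t ≤ s := by
    rw [hsdef]
    exact Nat.le_findGreatest (by omega) hPt
  have hs : ∀ u, t ≤ u → u ≤ s → f u ∈ S := by
    have := Nat.findGreatest_spec (P := fun s => ∀ u, t ≤ u → u ≤ s → f u ∈ S)
      (n := n - 1) (m := t) (by omega) hPt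
    rw [← hsdef] at this
    exact this
  refine ⟨s, hts, by omega, hs, ?_⟩
  by_cases hs1 : s = n - 1
  · exact Or.inl hs1
  right
  have hk : Nat.findGreatest (fun s => ∀ u, t ≤ u → u ≤ s → f u ∈ S) (n - 1) < s + 1 := by
    rw [← hsdef]; omega
  have hng := Nat.findGreatest_is_greatest (P := fun s => ∀ u, t ≤ u → u ≤ s → f u ∈ S)
    (n := n - 1) (k := s + 1) hk (by omega)
  have hng' : ¬ ∀ u, t ≤ u → u ≤ s + 1 → f u ∈ S := hng
  push_neg at hng'
  obtain ⟨u, hu1, hu2, hu3⟩ := hng'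
  have hus : u = s + 1 := by
    by_contra hne
    exact hu3 (hs u hu1 (by omega))
  rwa [hus] at hu3

end ESDPathMain
section ESDPathKey

variable {V : Type*} {H' : Type*} {G : SimpleGraph V} {H : SimpleGraph H'}

private lemma key_lemma (D : ESD G H) (f : ℕ → V) (n : ℕ)
    (hn : 0 < n)
    (hinj : ∀ i j, i < n → j < n → f i = f j → i = j)
    (hadj : ∀ i j, i < n → j < n → (G.Adj (f i) (f j) ↔ i + 1 = j ∨ j + 1 = i))
    (hx : D.Peripheral (f 0)) (hy : D.Peripheral (f (n - 1))) (hxy : f 0 ≠ f (n - 1)) :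
    ∀ q p (a b : H'), q < n → p < q → f p ∈ D.ηi a b → f q ∈ D.ηi a b → False := by
  intro q
  induction q using Nat.strong_induction_on with
  | _ q M =>
  intro p a b hqn hpq hp hq
  have hpn : p < n := by omega
  obtain ⟨x₁, y₁, hxy₁, hdeg₁, hint₁, hv₁⟩ := hx
  obtain ⟨xk, yk, hxyk, hdegk, hintk, hvk⟩ := hy
  have hf0 : f 0 ∈ D.ηi x₁ y₁ := by rw [hint₁]; rfl
  have hfk : f (n - 1) ∈ D.ηi xk yk := by rw [hintk]; rfl
  have hf0e : f 0 ∈ D.ηe x₁ y₁ := D.ηi_sub _ _ hf0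
  have hfke : f (n - 1) ∈ D.ηe xk yk := D.ηi_sub _ _ hfk
  have hab : H.Adj a b := D.adj_of_i' hp
  have hpe : f p ∈ D.ηe a b := D.ηi_sub _ _ hp
  have hqe : f q ∈ D.ηe a b := D.ηi_sub _ _ hq
  have hconsec : ∀ i, i + 1 < n → G.Adj (f i) (f (i + 1)) := fun i hi =>
    (hadj i (i + 1) (by omega) hi).mpr (Or.inl rfl)
  -- F2 : path vertices in other interfaces at `a` are pinned
  have F2 : ∀ r, r < n → ∀ d, d ≠ b → f r ∈ D.ηi a d → r = p + 1 ∧ q = p + 2 := by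
    intro r hr d hdb hrd
    have h1 := (hadj r p hr hpn).mp (D.compl' hrd hp hdb)
    have h2 := (hadj r q hr hqn).mp (D.compl' hrd hq hdb)
    rcases h1 with h1 | h1 <;> rcases h2 with h2 | h2 <;> omega
  -- minimality wrapper
  have MM : ∀ s r (c d : H'), s < q → r < s → f r ∈ D.ηi c d → f s ∈ D.ηi c d → False :=
    fun s r c d hs hrs h1 h2 => M s hs r c d (by omega) hrs h1 h2
  -- the unified trapping and endgame argument
  have main : ∀ m', m' < q →
      (∀ r, r < n → f r ∈ D.ηi b a → r ≤ m') →
      (∀ j, j < n → ∀ c, H.Adj b c → c ≠ a → f j ∈ D.ηi b c → j ≤ m' + 1) →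
      (∃ r, r < n ∧ r < n - 1 ∧ f r ∈ D.ηi b a) → False := by
    intro m' hm'q W1 W3 W4
    have trap : ∀ j, q ≤ j → j < n → f j ∈ D.ηe a b ∨ f j ∈ D.ηv a ∨
        ∃ x y z, f j ∈ D.ηt x y z ∧ a ∈ ({x, y, z} : Set H') ∧ b ∈ ({x, y, z} : Set H') := by
      intro j hj
      induction j, hj using Nat.le_induction with
      | base => exact fun _ => Or.inl hqe
      | succ j hqj ih =>
        intro hj1n
        have hjn : j < n := by omega
        have hstep : G.Adj (f j) (f (j + 1)) := hconsec j hj1n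
        rcases ih hjn with hR | hR | hR
        · rcases D.nbr_e' hR hstep with h | ⟨w, hbw, hwb, hu, hv⟩ | ⟨w, hbw, hwa, hu, hv⟩ |
            ⟨hu, hv⟩ | ⟨hu, hv⟩ | ⟨hu1, hu2, xx, yy, zz, hv, hax, hbx⟩
          · exact Or.inl h
          · obtain ⟨he1, he2⟩ := F2 (j + 1) hj1n w hwb hv
            omega
          · have := W1 j hjn hu; omega
          · exact Or.inr (Or.inl hv)
          · have := W1 j hjn hu; omega
          · exact Or.inr (Or.inr ⟨xx, yy, zz, hv, hax, hbx⟩)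
        · rcases D.nbr_v' hR hstep with h | ⟨y, hay, hv⟩
          · exact Or.inr (Or.inl h)
          · by_cases hyb : y = b
            · subst hyb; exact Or.inl (D.ηi_sub _ _ hv)
            · obtain ⟨he1, he2⟩ := F2 (j + 1) hj1n y hyb hv; omega
        · obtain ⟨x, y, z, ht, hax, hbx⟩ := hR
          rcases D.nbr_t' ht hstep with ⟨x', y', z', hv, hset⟩ | ⟨x₂, y₂, z₂, htri, hset, hc⟩
          · exact Or.inr (Or.inr ⟨x', y', z', hv, by rw [hset]; exact hax,
              by rw [hset]; exact hbx⟩)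
          · have ha2 : a = x₂ ∨ a = y₂ ∨ a = z₂ := by
              have hmem : a ∈ ({x₂, y₂, z₂} : Set H') := by rw [hset]; exact hax
              simpa using hmem
            have hb2 : b = x₂ ∨ b = y₂ ∨ b = z₂ := by
              have hmem : b ∈ ({x₂, y₂, z₂} : Set H') := by rw [hset]; exact hbx
              simpa using hmem
            obtain ⟨hA1, hA2, hA3⟩ := htri
            rcases ha2 with rfl | rfl | rfl
            · rcases hb2 with hb2 | rfl | rfl
              · exact absurd hb2.symm hab.ne
              · exact Or.inl (D.ηi_sub _ _ hc.1)
              · obtain ⟨he1, he2⟩ := F2 (j + 1) hj1n y₂ hA2.ne hc.1; omega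
            · rcases hb2 with rfl | hb2 | rfl
              · exact Or.inl (D.ηi_sub _ _ hc.2)
              · exact absurd hb2.symm hab.ne
              · obtain ⟨he1, he2⟩ := F2 (j + 1) hj1n x₂ hA3.ne hc.2; omega
            · rcases hb2 with rfl | rfl | hb2
              · have := W3 (j + 1) hj1n y₂ hA1 hA2.ne hc.1; omega
              · have := W3 (j + 1) hj1n x₂ hA1.symm hA3.ne hc.2
                omega
              · exact absurd hb2.symm hab.ne
    have hlast := trap (n - 1) (by omega) (by omega)
    rcases hlast with hR | hR | hR
    · rcases D.e_eq' hR hfke with ⟨rfl, rfl⟩ | ⟨rfl, rfl⟩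
      · rw [hintk] at hp
        have := hinj p (n - 1) hpn (by omega) hp
        omega
      · obtain ⟨r, hr1, hr2, hr3⟩ := W4
        rw [hintk] at hr3
        have := hinj r (n - 1) hr1 (by omega) hr3
        omega
    · exact not_mem_both (D.disj_ve a xk yk) hR hfke
    · obtain ⟨x, y, z, ht, -, -⟩ := hR
      exact not_mem_both (D.disj_et xk yk x y z) hfke ht
  -- entry analysis
  obtain ⟨m, hmp, hseg, hbd⟩ := seg_min f (D.ηe a b) p hpe
  rcases hbd with rfl | ⟨m₁, rfl, hm1⟩
  · -- the block starts at the beginning of the path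
    have h00 : f 0 ∈ D.ηe a b := hseg 0 le_rfl (Nat.zero_le p)
    rcases D.e_eq' h00 hf0e with ⟨rfl, rfl⟩ | ⟨rfl, rfl⟩
    · rw [hint₁] at hp hq
      have h1 := hinj p 0 hpn hn hp
      have h2 := hinj q 0 hqn hn hq
      omega
    · refine main 0 (by omega) ?_ ?_ ⟨0, hn, by omega, by rw [hint₁]; rfl⟩
      · intro r hr hri
        rw [hint₁] at hri
        have := hinj r 0 hr hn hri
        omega
      · intro j hjn c hbc hca hji
        exact absurd (hdeg₁ c hbc) hca
  · -- the block is entered from outside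
    have hm₁p : m₁ + 1 ≤ p := hmp
    have hm₁n : m₁ + 1 < n := by omega
    have hme : f (m₁ + 1) ∈ D.ηe a b := hseg (m₁ + 1) le_rfl hmp
    have hadjm : G.Adj (f (m₁ + 1)) (f m₁) := (hconsec m₁ hm₁n).symm
    rcases D.nbr_e' hme hadjm with h | ⟨w, haw, hwb, hu, hv⟩ | ⟨w, hbw, hwa, hu, hv⟩ |
      ⟨hu, hv⟩ | ⟨hu, hv⟩ | ⟨hu1, hu2, xx, yy, zz, hv, hax, hbx⟩
    · exact hm1 h
    · obtain ⟨he1, he2⟩ := F2 m₁ (by omega) w hwb hv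
      omega
    · -- entered through the b-side : the β case
      refine main (m₁ + 1) (by omega) ?_ ?_ ⟨m₁ + 1, by omega, by omega, hu⟩
      · intro r hr hri
        have := (hadj r m₁ hr (by omega)).mp (D.compl' hri hv (Ne.symm hwa))
        rcases this with h' | h' <;> omega
      · intro j hjn c hbc hca hji
        have := (hadj j (m₁ + 1) hjn hm₁n).mp (D.compl' hji hu hca)
        rcases this with h' | h' <;> omega
    · -- entered from ηv a : impossible
      obtain ⟨r, hrm, hrseg, hrbd⟩ := seg_min f (D.ηv a) m₁ hv
      rcases hrbd with rfl | ⟨r', rfl, hr'⟩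
      · exact not_mem_both (D.disj_ve a x₁ y₁) (hrseg 0 le_rfl (Nat.zero_le _)) hf0e
      · have h1 : f (r' + 1) ∈ D.ηv a := hrseg (r' + 1) le_rfl hrm
        have hadjr : G.Adj (f (r' + 1)) (f r') := (hconsec r' (by omega)).symm
        rcases D.nbr_v' h1 hadjr with h | ⟨y, hay, hri⟩
        · exact hr' h
        · by_cases hyb : y = b
          · rw [hyb] at hri
            exact MM p r' a b hpq (by omega) hri hp
          · obtain ⟨he1, he2⟩ := F2 r' (by omega) y hyb hri
            omega
    · -- entered from ηv b : impossible
      obtain ⟨r, hrm, hrseg, hrbd⟩ := seg_min f (D.ηv b) m₁ hv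
      rcases hrbd with rfl | ⟨r', rfl, hr'⟩
      · exact not_mem_both (D.disj_ve b x₁ y₁) (hrseg 0 le_rfl (Nat.zero_le _)) hf0e
      · have h1 : f (r' + 1) ∈ D.ηv b := hrseg (r' + 1) le_rfl hrm
        have hadjr : G.Adj (f (r' + 1)) (f r') := (hconsec r' (by omega)).symm
        rcases D.nbr_v' h1 hadjr with h | ⟨y, hby, hri⟩
        · exact hr' h
        · by_cases hya : y = a
          · rw [hya] at hri
            exact MM (m₁ + 1) r' b a (by omega) (by omega) hri hu
          · have := (hadj r' (m₁ + 1) (by omega) hm₁n).mp (D.compl' hri hu hya)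
            rcases this with h' | h' <;> omega
    · -- entered from a triangle : impossible
      obtain ⟨r, hrm, hrseg, hrbd⟩ := seg_min f
        {v | ∃ x y z, v ∈ D.ηt x y z ∧ a ∈ ({x, y, z} : Set H') ∧ b ∈ ({x, y, z} : Set H')}
        m₁ ⟨xx, yy, zz, hv, hax, hbx⟩
      rcases hrbd with rfl | ⟨r', rfl, hr'⟩
      · obtain ⟨x, y, z, ht0, -, -⟩ := hrseg 0 le_rfl (Nat.zero_le _)
        exact not_mem_both (D.disj_et x₁ y₁ x y z) hf0e ht0
      · obtain ⟨x, y, z, ht1, ha1, hb1⟩ := hrseg (r' + 1) le_rfl hrm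
        have hadjr : G.Adj (f (r' + 1)) (f r') := (hconsec r' (by omega)).symm
        have hr'p : r' < p := by omega
        rcases D.nbr_t' ht1 hadjr with ⟨x', y', z', hv', hset⟩ | ⟨x₂, y₂, z₂, htri, hset, hc⟩
        · exact hr' ⟨x', y', z', hv', by rw [hset]; exact ha1, by rw [hset]; exact hb1⟩
        · have ha2 : a = x₂ ∨ a = y₂ ∨ a = z₂ := by
            have hmem : a ∈ ({x₂, y₂, z₂} : Set H') := by rw [hset]; exact ha1
            simpa using hmem
          have hb2 : b = x₂ ∨ b = y₂ ∨ b = z₂ := by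
            have hmem : b ∈ ({x₂, y₂, z₂} : Set H') := by rw [hset]; exact hb1
            simpa using hmem
          obtain ⟨hA1, hA2, hA3⟩ := htri
          rcases ha2 with rfl | rfl | rfl
          · rcases hb2 with hb2 | rfl | rfl
            · exact absurd hb2.symm hab.ne
            · exact MM p r' a b hpq hr'p hc.1 hp
            · obtain ⟨he1, he2⟩ := F2 r' (by omega) y₂ hA2.ne hc.1; omega
          · rcases hb2 with rfl | hb2 | rfl
            · exact MM p r' a b hpq hr'p hc.2 hp
            · exact absurd hb2.symm hab.ne
            · obtain ⟨he1, he2⟩ := F2 r' (by omega) x₂ hA3.ne hc.2; omega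
          · rcases hb2 with rfl | rfl | hb2
            · have := (hadj r' (m₁ + 1) (by omega) hm₁n).mp (D.compl' hc.1 hu2 hA2.ne)
              rcases this with h' | h' <;> omega
            · have := (hadj r' (m₁ + 1) (by omega) hm₁n).mp (D.compl' hc.2 hu2 hA3.ne)
              rcases this with h' | h' <;> omega
            · exact absurd hb2.symm hab.ne

end ESDPathKey
section ESDPathFinal

variable {V : Type*} {H' : Type*} {G : SimpleGraph V} {H : SimpleGraph H'}

private lemma in_edge_lemma (D : ESD G H) (f : ℕ → V) (n : ℕ)
    (hn : 0 < n)
    (hinj : ∀ i j, i < n → j < n → f i = f j → i = j)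
    (hadj : ∀ i j, i < n → j < n → (G.Adj (f i) (f j) ↔ i + 1 = j ∨ j + 1 = i))
    (hx : D.Peripheral (f 0)) (hy : D.Peripheral (f (n - 1))) (hxy : f 0 ≠ f (n - 1)) :
    ∀ t, t < n → ∃ a b, H.Adj a b ∧ f t ∈ D.ηe a b := by
  have hkey := key_lemma D f n hn hinj hadj hx hy hxy
  obtain ⟨x₁, y₁, hxy₁, hdeg₁, hint₁, hv₁⟩ := hx
  obtain ⟨xk, yk, hxyk, hdegk, hintk, hvk⟩ := hy
  have hf0e : f 0 ∈ D.ηe x₁ y₁ := D.ηi_sub _ _ (by rw [hint₁]; rfl)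
  have hfke : f (n - 1) ∈ D.ηe xk yk := D.ηi_sub _ _ (by rw [hintk]; rfl)
  have hconsec : ∀ i, i + 1 < n → G.Adj (f i) (f (i + 1)) := fun i hi =>
    (hadj i (i + 1) (by omega) hi).mpr (Or.inl rfl)
  intro t ht
  rcases D.cover (f t) with ⟨x, hvx⟩ | ⟨x, y, he⟩ | ⟨x, y, z, htr⟩
  · exfalso
    obtain ⟨r, hrt, hrseg, hrbd⟩ := seg_min f (D.ηv x) t hvx
    obtain ⟨s, hts, hsn, hsseg, hsbd⟩ := seg_max f n (D.ηv x) t ht hvx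
    rcases hrbd with rfl | ⟨r', rfl, hr'⟩
    · exact not_mem_both (D.disj_ve x x₁ y₁) (hrseg 0 le_rfl (Nat.zero_le _)) hf0e
    by_cases hsl : s = n - 1
    · rw [hsl] at hsseg
      exact not_mem_both (D.disj_ve x xk yk) (hsseg (n - 1) (by omega) le_rfl) hfke
    have hs1 : f (s + 1) ∉ D.ηv x := hsbd.resolve_left hsl
    have hs1n : s + 1 < n := by omega
    rcases D.nbr_v' (hrseg (r' + 1) le_rfl hrt) ((hconsec r' (by omega)).symm) with
      hLv | ⟨yl, hxyl, hil⟩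
    · exact hr' hLv
    rcases D.nbr_v' (hsseg s hts le_rfl) (hconsec s hs1n) with hRv | ⟨yr, hxyr, hir⟩
    · exact hs1 hRv
    by_cases hyy : yl = yr
    · rw [hyy] at hil
      exact hkey (s + 1) r' x yr hs1n (by omega) hil hir
    · have := (hadj r' (s + 1) (by omega) hs1n).mp (D.compl' hil hir hyy)
      rcases this with h | h <;> omega
  · exact ⟨x, y, D.adj_of_e' he, he⟩
  · exfalso
    have htS : f t ∈ {v | ∃ x' y' z', v ∈ D.ηt x' y' z' ∧ ({x', y', z'} : Set H') = {x, y, z}} :=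
      ⟨x, y, z, htr, rfl⟩
    obtain ⟨r, hrt, hrseg, hrbd⟩ := seg_min f _ t htS
    obtain ⟨s, hts, hsn, hsseg, hsbd⟩ := seg_max f n _ t ht htS
    rcases hrbd with rfl | ⟨r', rfl, hr'⟩
    · obtain ⟨xa, ya, za, ht0, -⟩ := hrseg 0 le_rfl (Nat.zero_le _)
      exact not_mem_both (D.disj_et x₁ y₁ xa ya za) hf0e ht0
    by_cases hsl : s = n - 1
    · rw [hsl] at hsseg
      obtain ⟨xa, ya, za, htn, -⟩ := hsseg (n - 1) (by omega) le_rfl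
      exact not_mem_both (D.disj_et xk yk xa ya za) hfke htn
    have hs1 : f (s + 1) ∉ {v | ∃ x' y' z', v ∈ D.ηt x' y' z' ∧
      ({x', y', z'} : Set H') = {x, y, z}} := hsbd.resolve_left hsl
    have hs1n : s + 1 < n := by omega
    obtain ⟨xa, ya, za, hta, hseta⟩ := hrseg (r' + 1) le_rfl hrt
    rcases D.nbr_t' hta ((hconsec r' (by omega)).symm) with
      ⟨x', y', z', hv', hset'⟩ | ⟨x₂, y₂, z₂, htri₂, hset₂, hc₂⟩
    · exact hr' ⟨x', y', z', hv', hset'.trans hseta⟩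
    obtain ⟨xb, yb, zb, htb, hsetb⟩ := hsseg s hts le_rfl
    rcases D.nbr_t' htb (hconsec s hs1n) with
      ⟨x', y', z', hv', hset'⟩ | ⟨x₃, y₃, z₃, htri₃, hset₃, hc₃⟩
    · exact hs1 ⟨x', y', z', hv', hset'.trans hsetb⟩
    have hset23 : ({x₃, y₃, z₃} : Set H') = {x₂, y₂, z₂} := by
      rw [hset₃.trans hsetb, ← (hset₂.trans hseta)]
    have hx3 : x₃ = x₂ ∨ x₃ = y₂ ∨ x₃ = z₂ := by
      have hmem : x₃ ∈ ({x₂, y₂, z₂} : Set H') := by rw [← hset23]; simp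
      simpa using hmem
    have hy3 : y₃ = x₂ ∨ y₃ = y₂ ∨ y₃ = z₂ := by
      have hmem : y₃ ∈ ({x₂, y₂, z₂} : Set H') := by rw [← hset23]; simp
      simpa using hmem
    obtain ⟨hA1, hA2, hA3⟩ := htri₂
    obtain ⟨hB1, hB2, hB3⟩ := htri₃
    have hNA : ∀ (c d e : H'), H.Adj c d → H.Adj c e → d ≠ e →
        f r' ∈ D.ηi c d → f (s + 1) ∈ D.ηi c e → False := by
      intro c d e h1 h2 h3 h4 h5
      have := (hadj r' (s + 1) (by omega) hs1n).mp (D.complete c d e h1 h2 h3 _ h4 _ h5)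
      rcases this with h | h <;> omega
    have hK : ∀ (c d : H'), f r' ∈ D.ηi c d → f (s + 1) ∈ D.ηi c d → False := fun c d h4 h5 =>
      hkey (s + 1) r' c d hs1n (by omega) h4 h5
    have hc₂1 := hc₂.1
    have hc₂2 := hc₂.2
    have hc₃1 := hc₃.1
    have hc₃2 := hc₃.2
    rcases hx3 with h3 | h3 | h3 <;> rcases hy3 with h4 | h4 | h4 <;>
      rw [h3, h4] at hc₃1 hc₃2
    · exact hB1.ne (h3.trans h4.symm)
    · exact hK x₂ y₂ hc₂1 hc₃1
    · exact hNA x₂ y₂ z₂ hA1 hA3 hA2.ne hc₂1 hc₃1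
    · exact hK y₂ x₂ hc₂2 hc₃1
    · exact hB1.ne (h3.trans h4.symm)
    · exact hNA y₂ x₂ z₂ hA1.symm hA2 hA3.ne hc₂2 hc₃1
    · exact hNA x₂ y₂ z₂ hA1 hA3 hA2.ne hc₂1 hc₃2
    · exact hNA y₂ x₂ z₂ hA1.symm hA2 hA3.ne hc₂2 hc₃2
    · exact hB1.ne (h3.trans h4.symm)

end ESDPathFinal
/-- an induced path between two distinct peripheral vertices meets each
interface in at most one vertex and is contained in the union of the edge sets. -/
theorem path_inside_edges {V : Type*} {H' : Type*}
    (G : SimpleGraph V) (H : SimpleGraph H') (D : ESD G H)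
    (l : List V) (hl : IsInducedPathList G l) (hne : l ≠ [])
    (hx : D.Peripheral (l.head hne)) (hy : D.Peripheral (l.getLast hne))
    (hxy : l.head hne ≠ l.getLast hne) :
    (∀ a b : H', H.Adj a b → ∀ u ∈ l, ∀ v ∈ l,
      u ∈ D.ηi a b → v ∈ D.ηi a b → u = v) ∧
    (∀ u ∈ l, ∃ a b : H', H.Adj a b ∧ u ∈ D.ηe a b) := by
  classical
  have hn : 0 < l.length := List.length_pos_iff.mpr hne
  set n := l.length with hnl
  set f : ℕ → V := fun i => if h : i < l.length then l.get ⟨i, h⟩ else l.head hne with hf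
  have hfget : ∀ i (h : i < n), f i = l.get ⟨i, h⟩ := fun i h => dif_pos h
  obtain ⟨hne', hnodup, hidx⟩ := hl
  have hinj : ∀ i j, i < n → j < n → f i = f j → i = j := by
    intro i j hi hj hij
    rw [hfget i hi, hfget j hj] at hij
    simp only [List.get_eq_getElem] at hij
    exact (List.Nodup.getElem_inj_iff hnodup).mp hij
  have hadjf : ∀ i j, i < n → j < n → (G.Adj (f i) (f j) ↔ i + 1 = j ∨ j + 1 = i) := by
    intro i j hi hj
    rw [hfget i hi, hfget j hj]
    exact hidx i j hi hj
  have hf0 : f 0 = l.head hne := by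
    rw [hfget 0 hn, List.head_eq_getElem_zero hne]
    simp [List.get_eq_getElem]
  have hfl : f (n - 1) = l.getLast hne := by
    rw [hfget (n - 1) (by omega), List.getLast_eq_getElem]
    simp [List.get_eq_getElem, hnl]
  have hx' : D.Peripheral (f 0) := hf0 ▸ hx
  have hy' : D.Peripheral (f (n - 1)) := hfl ▸ hy
  have hxy' : f 0 ≠ f (n - 1) := by rw [hf0, hfl]; exact hxy
  have hkey := key_lemma D f n hn hinj hadjf hx' hy' hxy'
  have hedge := in_edge_lemma D f n hn hinj hadjf hx' hy' hxy'
  constructor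
  · intro a b _ u hu v hv hua hvb
    obtain ⟨⟨i, hi⟩, rfl⟩ := List.mem_iff_get.mp hu
    obtain ⟨⟨j, hj⟩, rfl⟩ := List.mem_iff_get.mp hv
    rw [← hfget i hi] at hua ⊢
    rw [← hfget j hj] at hvb ⊢
    rcases lt_trichotomy i j with h | h | h
    · exact (hkey j i a b hj h hua hvb).elim
    · rw [h]
    · exact (hkey i j a b hi h hvb hua).elim
  · intro u hu
    obtain ⟨⟨i, hi⟩, rfl⟩ := List.mem_iff_get.mp hu
    rw [← hfget i hi]
    exact hedge i hi
end

section
/- Let (H, η) be an extended strip decomposition of a graph G and let Q be an induced path in G between two distinct peripheral vertices x and y. For every edge e = ab of H such that V(Q) ∩ η(e) ≠ ∅, the induced subgraph G[V(Q) ∩ η(e)] is a path whose one endpoint lies in η(e, a), whose other endpoint lies in η(e, b), and all of whose internal vertices lie in η(e) \ (η(e, a) ∪ η(e, b)). -/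
-- ==================== auxiliary lemmas ====================
section Aux
variable {V : Type*} {H' : Type*} {G : SimpleGraph V} {H : SimpleGraph H'}

lemma Tri.swap12 {x y z : H'} (h : Tri H x y z) : Tri H y x z :=
  ⟨h.1.symm, h.2.2, h.2.1⟩

lemma Tri.adj12 {x y z : H'} (h : Tri H x y z) : H.Adj x y := h.1
lemma Tri.adj23 {x y z : H'} (h : Tri H x y z) : H.Adj y z := h.2.1
lemma Tri.adj13 {x y z : H'} (h : Tri H x y z) : H.Adj x z := h.2.2

namespace ESD
variable (D : ESD G H)

lemma not_ve {v : V} {x c d : H'} (h1 : v ∈ D.ηv x) (h2 : v ∈ D.ηe c d) : False := by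
  have h := D.disj_ve x c d
  rw [Set.eq_empty_iff_forall_notMem] at h
  exact h v ⟨h1, h2⟩

lemma not_vt {v : V} {x c d r : H'} (h1 : v ∈ D.ηv x) (h2 : v ∈ D.ηt c d r) : False := by
  have h := D.disj_vt x c d r
  rw [Set.eq_empty_iff_forall_notMem] at h
  exact h v ⟨h1, h2⟩

lemma not_et {v : V} {x y c d r : H'} (h1 : v ∈ D.ηe x y) (h2 : v ∈ D.ηt c d r) : False := by
  have h := D.disj_et x y c d r
  rw [Set.eq_empty_iff_forall_notMem] at h
  exact h v ⟨h1, h2⟩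

lemma vv_eq {v : V} {x y : H'} (h1 : v ∈ D.ηv x) (h2 : v ∈ D.ηv y) : x = y := by
  by_contra hne
  have h := D.disj_vv x y hne
  rw [Set.eq_empty_iff_forall_notMem] at h
  exact h v ⟨h1, h2⟩

lemma ee_eq {v : V} {x y c d : H'} (h1 : v ∈ D.ηe x y) (h2 : v ∈ D.ηe c d) :
    (x = c ∧ y = d) ∨ (x = d ∧ y = c) := by
  by_contra hne
  push_neg at hne
  have h := D.disj_ee x y c d (fun ⟨ha, hb⟩ => hne.1 ha hb) (fun ⟨ha, hb⟩ => hne.2 ha hb)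
  rw [Set.eq_empty_iff_forall_notMem] at h
  exact h v ⟨h1, h2⟩

lemma tt_eq {v : V} {x y z c d r : H'} (h1 : v ∈ D.ηt x y z) (h2 : v ∈ D.ηt c d r) :
    ({x, y, z} : Set H') = {c, d, r} := by
  by_contra hne
  have h := D.disj_tt x y z c d r hne
  rw [Set.eq_empty_iff_forall_notMem] at h
  exact h v ⟨h1, h2⟩

lemma tri_of_mem {v : V} {x y z : H'} (h : v ∈ D.ηt x y z) : Tri H x y z := by
  by_contra hne
  rw [D.ηt_empty x y z hne] at h
  exact h

lemma adj_of_mem_ηe {v : V} {x y : H'} (h : v ∈ D.ηe x y) : H.Adj x y := by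
  by_contra hne
  rw [D.ηe_empty x y hne] at h
  exact h

end ESD
end Aux

-- ==================== path context ====================
section Path
variable {V : Type*} {H' : Type*} {G : SimpleGraph V} {H : SimpleGraph H'}

/-- Context: an induced path `f 0, ..., f (n-1)` between two distinct peripheral
vertices of an extended strip decomposition. -/
structure PCtx (D : ESD G H) where
  n : ℕ
  f : ℕ → V
  hn : 2 ≤ n
  inj : ∀ i j, i < n → j < n → f i = f j → i = j
  adj : ∀ i j, i < n → j < n → (G.Adj (f i) (f j) ↔ (i + 1 = j ∨ j + 1 = i))
  p : H'
  q : H'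
  p' : H'
  q' : H'
  hpq : H.Adj p q
  hpend : ∀ u, H.Adj p u → u = q
  hxi : D.ηi p q = {f 0}
  hpv : D.ηv p = ∅
  hpq' : H.Adj p' q'
  hpend' : ∀ u, H.Adj p' u → u = q'
  hyi : D.ηi p' q' = {f (n - 1)}
  hpv' : D.ηv p' = ∅
  hxy : f 0 ≠ f (n - 1)

namespace PCtx
variable {D : ESD G H} (C : PCtx D)

/-- The reversed path context. -/
def reverse : PCtx D where
  n := C.n
  f := fun i => C.f (C.n - 1 - i)
  hn := C.hn
  inj := by
    intro i j hi hj hf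
    have h1 : C.n - 1 - i < C.n := by omega
    have h2 : C.n - 1 - j < C.n := by omega
    have := C.inj _ _ h1 h2 hf
    omega
  adj := by
    intro i j hi hj
    have h1 : C.n - 1 - i < C.n := by omega
    have h2 : C.n - 1 - j < C.n := by omega
    refine (C.adj _ _ h1 h2).trans ?_
    constructor <;> intro h <;> omega
  p := C.p'
  q := C.q'
  p' := C.p
  q' := C.q
  hpq := C.hpq'
  hpend := C.hpend'
  hxi := by simpa using C.hyi
  hpv := C.hpv'
  hpq' := C.hpq
  hpend' := C.hpend
  hyi := by simpa using C.hxi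
  hpv' := C.hpv
  hxy := by simpa using C.hxy.symm

@[simp] lemma reverse_n : C.reverse.n = C.n := rfl
@[simp] lemma reverse_f (i : ℕ) : C.reverse.f i = C.f (C.n - 1 - i) := rfl

lemma x_mem : C.f 0 ∈ D.ηi C.p C.q := by rw [C.hxi]; rfl
lemma y_mem : C.f (C.n - 1) ∈ D.ηi C.p' C.q' := by rw [C.hyi]; rfl

lemma x_mem_e : C.f 0 ∈ D.ηe C.p C.q := D.ηi_sub _ _ C.x_mem
lemma y_mem_e : C.f (C.n - 1) ∈ D.ηe C.p' C.q' := D.ηi_sub _ _ C.y_mem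

lemma adj' {i j : ℕ} (hi : i < C.n) (hj : j < C.n) (h : G.Adj (C.f i) (C.f j)) :
    i + 1 = j ∨ j + 1 = i := (C.adj i j hi hj).mp h

/-- Two path vertices in interfaces at the same node of `H` on distinct edges
are consecutive on the path. -/
lemma forced {c d d' : H'} (h1 : H.Adj c d) (h2 : H.Adj c d') (hdd : d ≠ d')
    {i j : ℕ} (hi : i < C.n) (hj : j < C.n)
    (hiI : C.f i ∈ D.ηi c d) (hjI : C.f j ∈ D.ηi c d') :
    i + 1 = j ∨ j + 1 = i := by
  have hij : i ≠ j := by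
    intro h
    subst h
    rcases D.ee_eq (D.ηi_sub _ _ hiI) (D.ηi_sub _ _ hjI) with ⟨_, h⟩ | ⟨h, _⟩
    · exact hdd h
    · exact h2.ne' h.symm
  exact C.adj' hi hj (D.complete c d d' h1 h2 hdd _ hiI _ hjI)

end PCtx
end Path

section Path2
variable {V : Type*} {H' : Type*} {G : SimpleGraph V} {H : SimpleGraph H'}
namespace PCtx
variable {D : ESD G H} (C : PCtx D)

/-- Crossing classification: how the path can leave an edge set `η(cd)`. -/
lemma cross {c d : H'} {i j : ℕ}
    (hi : i < C.n) (hj : j < C.n) (hij : i + 1 = j ∨ j + 1 = i)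
    (hiE : C.f i ∈ D.ηe c d) (hjE : C.f j ∉ D.ηe c d) :
    (C.f i ∈ D.ηi c d ∧ ((∃ e, H.Adj c e ∧ e ≠ d ∧ C.f j ∈ D.ηi c e) ∨ C.f j ∈ D.ηv c)) ∨
    (C.f i ∈ D.ηi d c ∧ ((∃ e, H.Adj d e ∧ e ≠ c ∧ C.f j ∈ D.ηi d e) ∨ C.f j ∈ D.ηv d)) ∨
    (∃ r, Tri H c d r ∧ C.f i ∈ D.ηi c d ∧ C.f i ∈ D.ηi d c ∧ C.f j ∈ D.ηt c d r) := by
  have hG : G.Adj (C.f i) (C.f j) := (C.adj i j hi hj).mpr hij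
  rcases D.edge_cond _ _ hG with ⟨x, h1, h2⟩ | ⟨x, y, h1, h2⟩ | ⟨x, y, z, h1, h2⟩ |
    ⟨x, y, z, hxy, hxz, hyz, hc⟩ | ⟨x, y, hxy, hc⟩ | ⟨x, y, z, htri, hc⟩
  · exact (D.not_ve h1 hiE).elim
  · rcases D.ee_eq h1 hiE with ⟨rfl, rfl⟩ | ⟨rfl, rfl⟩
    · exact (hjE h2).elim
    · rw [D.ηe_symm] at h2; exact (hjE h2).elim
  · exact (D.not_et hiE h1).elim
  · rcases hc with ⟨ha, hb⟩ | ⟨ha, hb⟩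
    · rcases D.ee_eq (D.ηi_sub _ _ ha) hiE with ⟨rfl, rfl⟩ | ⟨rfl, rfl⟩
      · exact Or.inl ⟨ha, Or.inl ⟨z, hxz, fun h => hyz h.symm, hb⟩⟩
      · exact Or.inr (Or.inl ⟨ha, Or.inl ⟨z, hxz, fun h => hyz h.symm, hb⟩⟩)
    · rcases D.ee_eq (D.ηi_sub _ _ hb) hiE with ⟨rfl, rfl⟩ | ⟨rfl, rfl⟩
      · exact Or.inl ⟨hb, Or.inl ⟨y, hxy, hyz, ha⟩⟩
      · exact Or.inr (Or.inl ⟨hb, Or.inl ⟨y, hxy, hyz, ha⟩⟩)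
  · rcases hc with ⟨ha, hb⟩ | ⟨ha, hb⟩
    · rcases D.ee_eq (D.ηi_sub _ _ ha) hiE with ⟨rfl, rfl⟩ | ⟨rfl, rfl⟩
      · exact Or.inl ⟨ha, Or.inr hb⟩
      · exact Or.inr (Or.inl ⟨ha, Or.inr hb⟩)
    · exact (D.not_ve hb hiE).elim
  · rcases hc with ⟨ha, _⟩ | ⟨ha, hb1, hb2⟩
    · exact (D.not_et hiE ha).elim
    · rcases D.ee_eq (D.ηi_sub _ _ hb1) hiE with ⟨rfl, rfl⟩ | ⟨rfl, rfl⟩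
      · exact Or.inr (Or.inr ⟨z, htri, hb1, hb2, ha⟩)
      · refine Or.inr (Or.inr ⟨z, htri.swap12, hb2, hb1, ?_⟩)
        rwa [D.ηt_symm12] at ha

/-- Vertex-set trap, one step. -/
lemma vtrap_step {c : H'} {i j : ℕ}
    (hi : i < C.n) (hj : j < C.n) (hij : i + 1 = j ∨ j + 1 = i)
    (hiV : C.f i ∈ D.ηv c) (hjV : C.f j ∉ D.ηv c) :
    ∃ g, H.Adj c g ∧ C.f j ∈ D.ηi c g := by
  have hG : G.Adj (C.f i) (C.f j) := (C.adj i j hi hj).mpr hij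
  rcases D.edge_cond _ _ hG with ⟨x, h1, h2⟩ | ⟨x, y, h1, h2⟩ | ⟨x, y, z, h1, h2⟩ |
    ⟨x, y, z, hxy, hxz, hyz, hc⟩ | ⟨x, y, hxy, hc⟩ | ⟨x, y, z, htri, hc⟩
  · exact ((D.vv_eq h1 hiV ▸ hjV) h2).elim
  · exact (D.not_ve hiV h1).elim
  · exact (D.not_vt hiV h1).elim
  · rcases hc with ⟨ha, _⟩ | ⟨_, hb⟩
    · exact (D.not_ve hiV (D.ηi_sub _ _ ha)).elim
    · exact (D.not_ve hiV (D.ηi_sub _ _ hb)).elim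
  · rcases hc with ⟨ha, _⟩ | ⟨ha, hb⟩
    · exact (D.not_ve hiV (D.ηi_sub _ _ ha)).elim
    · exact ⟨y, D.vv_eq hb hiV ▸ hxy, D.vv_eq hb hiV ▸ ha⟩
  · rcases hc with ⟨ha, _⟩ | ⟨_, hb1, _⟩
    · exact (D.not_vt hiV ha).elim
    · exact (D.not_ve hiV (D.ηi_sub _ _ hb1)).elim

lemma vtrap_back {c : H'} :
    ∀ i, i < C.n → C.f i ∈ D.ηv c → ∃ j g, j < i ∧ H.Adj c g ∧ C.f j ∈ D.ηi c g := by
  intro i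
  induction i using Nat.strong_induction_on with
  | _ i IH =>
    intro hi hiV
    match i, hi with
    | 0, hi => exact (D.not_ve hiV C.x_mem_e).elim
    | (k+1), hi => by_cases hk : C.f k ∈ D.ηv c
                   · obtain ⟨j, g, hj, hadj, hmem⟩ := IH k (by omega) (by omega) hk
                     exact ⟨j, g, by omega, hadj, hmem⟩
                   · obtain ⟨g, hadj, hmem⟩ :=
                       C.vtrap_step hi (by omega) (Or.inr rfl) hiV hk
                     exact ⟨k, g, by omega, hadj, hmem⟩

lemma vtrap_fwd {c : H'} {i : ℕ} (hi : i < C.n) (hiV : C.f i ∈ D.ηv c) :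
    ∃ j g, i < j ∧ j < C.n ∧ H.Adj c g ∧ C.f j ∈ D.ηi c g := by
  have hi' : C.n - 1 - i < C.n := by omega
  have heq : C.n - 1 - (C.n - 1 - i) = i := by omega
  obtain ⟨j, g, hj, hadj, hmem⟩ := C.reverse.vtrap_back (C.n - 1 - i) (by simpa using hi')
    (by simpa [heq] using hiV)
  refine ⟨C.n - 1 - j, g, by omega, by omega, hadj, by simpa using hmem⟩
end PCtx
end Path2

set_option maxHeartbeats 1000000

section Path3
variable {V : Type*} {H' : Type*} {G : SimpleGraph V} {H : SimpleGraph H'}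

private lemma mem3 {x c d r : H'} (h : x ∈ ({c, d, r} : Set H')) :
    x = c ∨ x = d ∨ x = r := by simpa using h

private lemma pair_cases {x y c d r : H'} (hx : x = c ∨ x = d ∨ x = r)
    (hy : y = c ∨ y = d ∨ y = r) (hxy : x ≠ y) :
    (x = c ∧ y = d) ∨ (x = d ∧ y = c) ∨ (x = c ∧ y = r) ∨ (x = r ∧ y = c) ∨
    (x = d ∧ y = r) ∨ (x = r ∧ y = d) := by
  rcases hx with rfl | rfl | rfl <;> rcases hy with rfl | rfl | rfl <;>
    first
      | exact absurd rfl hxy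
      | tauto

private lemma triple_cases {x y z c d r : H'} (hx : x = c ∨ x = d ∨ x = r)
    (hy : y = c ∨ y = d ∨ y = r) (hz : z = c ∨ z = d ∨ z = r)
    (hxy : x ≠ y) (hxz : x ≠ z) (hyz : y ≠ z) :
    (x = c ∧ y = d ∧ z = r) ∨ (x = c ∧ y = r ∧ z = d) ∨ (x = d ∧ y = c ∧ z = r) ∨
    (x = d ∧ y = r ∧ z = c) ∨ (x = r ∧ y = c ∧ z = d) ∨ (x = r ∧ y = d ∧ z = c) := by
  rcases hx with rfl | rfl | rfl <;> rcases hy with rfl | rfl | rfl <;>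
    rcases hz with rfl | rfl | rfl <;>
    first
      | exact absurd rfl hxy
      | exact absurd rfl hxz
      | exact absurd rfl hyz
      | tauto

namespace ESD
variable (D : ESD G H)

lemma perm231 (x y z : H') : D.ηt x y z = D.ηt y z x :=
  (D.ηt_symm12 x y z).trans (D.ηt_symm23 y x z)

lemma perm312 (x y z : H') : D.ηt x y z = D.ηt z x y :=
  (D.perm231 x y z).trans (D.perm231 y z x)

end ESD

namespace PCtx
variable {D : ESD G H} (C : PCtx D)

/-- Triangle-set trap, one step. -/
lemma ttrap_step {c d r : H'} (ht : Tri H c d r) {i j : ℕ}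
    (hi : i < C.n) (hj : j < C.n) (hij : i + 1 = j ∨ j + 1 = i)
    (hiT : C.f i ∈ D.ηt c d r) (hjT : C.f j ∉ D.ηt c d r) :
    (C.f j ∈ D.ηi c d ∧ C.f j ∈ D.ηi d c) ∨ (C.f j ∈ D.ηi c r ∧ C.f j ∈ D.ηi r c) ∨
    (C.f j ∈ D.ηi d r ∧ C.f j ∈ D.ηi r d) := by
  have hG : G.Adj (C.f i) (C.f j) := (C.adj i j hi hj).mpr hij
  rcases D.edge_cond _ _ hG with ⟨x, h1, h2⟩ | ⟨x, y, h1, h2⟩ | ⟨x, y, z, h1, h2⟩ |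
    ⟨x, y, z, hxy, hxz, hyz, hc⟩ | ⟨x, y, hxy, hc⟩ | ⟨x, y, z, htri, hc⟩
  · exact (D.not_vt h1 hiT).elim
  · exact (D.not_et h1 hiT).elim
  · -- same triangle set
    exfalso
    have hset := D.tt_eq h1 hiT
    have htxyz := D.tri_of_mem h1
    have hx := mem3 (hset ▸ (show x ∈ ({x, y, z} : Set H') by simp))
    have hy := mem3 (hset ▸ (show y ∈ ({x, y, z} : Set H') by simp))
    have hz := mem3 (hset ▸ (show z ∈ ({x, y, z} : Set H') by simp))
    have heq : D.ηt x y z = D.ηt c d r := by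
      rcases triple_cases hx hy hz htxyz.adj12.ne htxyz.adj13.ne htxyz.adj23.ne with
        ⟨rfl, rfl, rfl⟩ | ⟨rfl, rfl, rfl⟩ | ⟨rfl, rfl, rfl⟩ | ⟨rfl, rfl, rfl⟩ |
        ⟨rfl, rfl, rfl⟩ | ⟨rfl, rfl, rfl⟩
      · rfl
      · exact D.ηt_symm23 _ _ _
      · exact D.ηt_symm12 _ _ _
      · exact D.perm312 _ _ _
      · exact D.perm231 _ _ _
      · exact (D.ηt_symm12 _ _ _).trans (D.perm312 _ _ _)
    exact hjT (heq ▸ h2)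
  · rcases hc with ⟨ha, _⟩ | ⟨_, hb⟩
    · exact (D.not_et (D.ηi_sub _ _ ha) hiT).elim
    · exact (D.not_et (D.ηi_sub _ _ hb) hiT).elim
  · rcases hc with ⟨ha, _⟩ | ⟨_, hb⟩
    · exact (D.not_et (D.ηi_sub _ _ ha) hiT).elim
    · exact (D.not_vt hb hiT).elim
  · rcases hc with ⟨ha, hb1, hb2⟩ | ⟨_, hb1, _⟩
    · -- f i ∈ ηt x y z, f j ∈ ηi x y ∩ ηi y x
      have hset := D.tt_eq ha hiT
      have hx := mem3 (hset ▸ (show x ∈ ({x, y, z} : Set H') by simp))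
      have hy := mem3 (hset ▸ (show y ∈ ({x, y, z} : Set H') by simp))
      rcases pair_cases hx hy htri.adj12.ne with
        ⟨rfl, rfl⟩ | ⟨rfl, rfl⟩ | ⟨rfl, rfl⟩ | ⟨rfl, rfl⟩ | ⟨rfl, rfl⟩ | ⟨rfl, rfl⟩
      · exact Or.inl ⟨hb1, hb2⟩
      · exact Or.inl ⟨hb2, hb1⟩
      · exact Or.inr (Or.inl ⟨hb1, hb2⟩)
      · exact Or.inr (Or.inl ⟨hb2, hb1⟩)
      · exact Or.inr (Or.inr ⟨hb1, hb2⟩)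
      · exact Or.inr (Or.inr ⟨hb2, hb1⟩)
    · exact (D.not_et (D.ηi_sub _ _ hb1) hiT).elim

lemma ttrap_back {c d r : H'} (ht : Tri H c d r) :
    ∀ i, i < C.n → C.f i ∈ D.ηt c d r → ∃ j, j < i ∧
      ((C.f j ∈ D.ηi c d ∧ C.f j ∈ D.ηi d c) ∨ (C.f j ∈ D.ηi c r ∧ C.f j ∈ D.ηi r c) ∨
       (C.f j ∈ D.ηi d r ∧ C.f j ∈ D.ηi r d)) := by
  intro i
  induction i using Nat.strong_induction_on with
  | _ i IH =>
    intro hi hiT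
    match i, hi with
    | 0, hi => exact (D.not_et C.x_mem_e hiT).elim
    | (k+1), hi => by_cases hk : C.f k ∈ D.ηt c d r
                   · obtain ⟨j, hj, hmem⟩ := IH k (by omega) (by omega) hk
                     exact ⟨j, by omega, hmem⟩
                   · exact ⟨k, by omega, C.ttrap_step ht hi (by omega) (Or.inr rfl) hiT hk⟩

lemma ttrap_fwd {c d r : H'} (ht : Tri H c d r) {i : ℕ} (hi : i < C.n)
    (hiT : C.f i ∈ D.ηt c d r) : ∃ j, i < j ∧ j < C.n ∧
      ((C.f j ∈ D.ηi c d ∧ C.f j ∈ D.ηi d c) ∨ (C.f j ∈ D.ηi c r ∧ C.f j ∈ D.ηi r c) ∨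
       (C.f j ∈ D.ηi d r ∧ C.f j ∈ D.ηi r d)) := by
  have hi' : C.n - 1 - i < C.n := by omega
  have heq : C.n - 1 - (C.n - 1 - i) = i := by omega
  obtain ⟨j, hj, hmem⟩ := C.reverse.ttrap_back ht (C.n - 1 - i) (by simpa using hi')
    (by simpa [heq] using hiT)
  exact ⟨C.n - 1 - j, by omega, by omega, by simpa using hmem⟩

end PCtx
end Path3

section Path4
variable {V : Type*} {H' : Type*} {G : SimpleGraph V} {H : SimpleGraph H'}
namespace PCtx
variable {D : ESD G H} (C : PCtx D)

/-- Entry classification: the first time the path enters `η(ab)`, it does so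
through an interface, coming from an adjacent interface at the same node. -/
lemma ecl {a b : H'} (hab : H.Adj a b) {s : ℕ} (hs : s < C.n) (hs0 : 0 < s)
    (hsE : C.f s ∈ D.ηe a b) (hmin : ∀ j, j < s → C.f j ∉ D.ηe a b) :
    (C.f s ∈ D.ηi a b ∧ ∃ e, H.Adj a e ∧ e ≠ b ∧ C.f (s - 1) ∈ D.ηi a e) ∨
    (C.f s ∈ D.ηi b a ∧ ∃ e, H.Adj b e ∧ e ≠ a ∧ C.f (s - 1) ∈ D.ηi b e) := by
  have hs1 : s - 1 < C.n := by omega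
  rcases C.cross hs hs1 (Or.inr (by omega)) hsE (hmin _ (by omega)) with
    ⟨h1, h2⟩ | ⟨h1, h2⟩ | ⟨r, htri, h1, h1', h2⟩
  · rcases h2 with ⟨e, hae, heb, hmem⟩ | hv
    · exact Or.inl ⟨h1, e, hae, heb, hmem⟩
    · exfalso
      obtain ⟨j, g, hj, hag, hmemj⟩ := C.vtrap_back (s - 1) hs1 hv
      by_cases hgb : g = b
      · exact hmin j (by omega) (D.ηi_sub _ _ (hgb ▸ hmemj))
      · have := C.forced hag hab hgb (by omega) hs hmemj h1
        omega
  · rcases h2 with ⟨e, hbe, hea, hmem⟩ | hv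
    · exact Or.inr ⟨h1, e, hbe, hea, hmem⟩
    · exfalso
      obtain ⟨j, g, hj, hbg, hmemj⟩ := C.vtrap_back (s - 1) hs1 hv
      by_cases hga : g = a
      · refine hmin j (by omega) ?_
        rw [D.ηe_symm]
        exact D.ηi_sub _ _ (hga ▸ hmemj)
      · have := C.forced hbg hab.symm hga (by omega) hs hmemj h1
        omega
  · exfalso
    obtain ⟨j, hj, hc⟩ := C.ttrap_back htri (s - 1) hs1 h2
    rcases hc with ⟨hc1, _⟩ | ⟨hc1, _⟩ | ⟨hc1, _⟩
    · exact hmin j (by omega) (D.ηi_sub _ _ hc1)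
    · have := C.forced htri.adj13 hab htri.adj23.ne' (by omega) hs hc1 h1
      omega
    · have := C.forced htri.adj23 hab.symm htri.adj13.ne' (by omega) hs hc1 h1'
      omega

/-- Exit classification (mirror of `ecl`). -/
lemma xcl {a b : H'} (hab : H.Adj a b) {t : ℕ} (ht : t + 1 < C.n)
    (htE : C.f t ∈ D.ηe a b)
    (hmax : ∀ j, t < j → j < C.n → C.f j ∉ D.ηe a b) :
    (C.f t ∈ D.ηi a b ∧ ∃ e, H.Adj a e ∧ e ≠ b ∧ C.f (t + 1) ∈ D.ηi a e) ∨
    (C.f t ∈ D.ηi b a ∧ ∃ e, H.Adj b e ∧ e ≠ a ∧ C.f (t + 1) ∈ D.ηi b e) := by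
  have e1 : C.n - 1 - (C.n - 1 - t) = t := by omega
  have e2 : C.n - 1 - (C.n - 1 - t - 1) = t + 1 := by omega
  have h := C.reverse.ecl hab (s := C.n - 1 - t) (by simp; omega) (by simp; omega)
    (by simpa [e1] using htE) ?_
  · simpa [e1, e2] using h
  · intro j hj
    simp only [reverse_f, reverse_n] at hj ⊢
    exact hmax _ (by omega) (by omega)

end PCtx
end Path4

section Path5
variable {V : Type*} {H' : Type*} {G : SimpleGraph V} {H : SimpleGraph H'}
namespace PCtx
variable {D : ESD G H} (C : PCtx D)

/-- If the path enters `η(ab)` at `s` through `η(ab,a)` coming from `η(ae,a)`,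
then either `ae` is the pendant edge of `x` (with `e` pendant), or the path meets
`η(ae,e)` in exactly one vertex, strictly before `s`. -/
lemma anchorE {a b e : H'} {s : ℕ} (hab : H.Adj a b) (hae : H.Adj a e) (heb : e ≠ b)
    (hs : s < C.n) (hs0 : 0 < s)
    (hα : C.f (s - 1) ∈ D.ηi a e) (hsIa : C.f s ∈ D.ηi a b)
    (sgla : ∀ k, k < C.n → C.f k ∈ D.ηi a b → k = s)
    (hmin : ∀ j, j < s → C.f j ∉ D.ηe a b) :
    (e = C.p ∧ a = C.q) ∨ (∃ r0, r0 < s ∧ ∀ k, k < C.n → C.f k ∈ D.ηi e a → k = r0) := by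
  classical
  have hwit : ∃ k, k < C.n ∧ C.f k ∈ D.ηe a e := ⟨s - 1, by omega, D.ηi_sub _ _ hα⟩
  obtain ⟨hr0n, hr0⟩ := Nat.find_spec hwit
  set r0 := Nat.find hwit with hr0def
  have hr0min : ∀ j, j < r0 → C.f j ∉ D.ηe a e := by
    intro j hj hmem
    exact Nat.find_min hwit hj ⟨by omega, hmem⟩
  have hr0le : r0 ≤ s - 1 := Nat.find_min' hwit ⟨by omega, D.ηi_sub _ _ hα⟩
  rcases Nat.eq_zero_or_pos r0 with h0 | hpos
  · have hx : C.f 0 ∈ D.ηe a e := h0 ▸ hr0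
    rcases D.ee_eq C.x_mem_e hx with ⟨hpa, hqe⟩ | ⟨hpe, hqa⟩
    · exfalso
      have hbq := C.hpend b (hpa ▸ hab)
      exact heb (hqe ▸ hbq).symm
    · exact Or.inl ⟨hpe.symm, hqa.symm⟩
  · rcases C.cross (c := a) (d := e) (i := r0) (j := r0 - 1) hr0n (by omega) (Or.inr (by omega)) hr0
      (hr0min _ (by omega)) with ⟨h1, h2⟩ | ⟨h1, h2⟩ | ⟨r, htri, h1, h1', h2⟩
    · -- came in through node a : impossible
      exfalso
      have hr0s : r0 = s - 1 := by
        have := C.forced hae hab heb hr0n hs h1 hsIa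
        omega
      rcases h2 with ⟨g, hag, hge, hmem⟩ | hv
      · by_cases hgb : g = b
        · exact hmin (r0 - 1) (by omega) (D.ηi_sub _ _ (hgb ▸ hmem))
        · have := C.forced hag hab hgb (by omega) hs hmem hsIa
          omega
      · obtain ⟨j, g, hj, hag, hmemj⟩ := C.vtrap_back (r0 - 1) (by omega) hv
        by_cases hgb : g = b
        · exact hmin j (by omega) (D.ηi_sub _ _ (hgb ▸ hmemj))
        · have := C.forced hag hab hgb (by omega) hs hmemj hsIa
          omega
    · -- came in through node e
      rcases h2 with ⟨g, heg, hga, hmem⟩ | hv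
      · refine Or.inr ⟨r0, by omega, ?_⟩
        intro k hk hkI
        have hf := C.forced hae.symm heg (fun h => hga h.symm) hk (by omega) hkI hmem
        rcases hf with h | h
        · exfalso
          refine hr0min k (by omega) ?_
          rw [D.ηe_symm]
          exact D.ηi_sub _ _ hkI
        · omega
      · exfalso
        obtain ⟨j, g, hj, heg, hmemj⟩ := C.vtrap_back (r0 - 1) (by omega) hv
        by_cases hga : g = a
        · refine hr0min j (by omega) ?_
          rw [D.ηe_symm]
          exact D.ηi_sub _ _ (hga ▸ hmemj)
        · have := C.forced heg hae.symm hga (by omega) hr0n hmemj h1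
          omega
    · -- came in through a triangle : impossible
      exfalso
      have hr0s : r0 = s - 1 := by
        have := C.forced hae hab heb hr0n hs h1 hsIa
        omega
      obtain ⟨j, hj, hc⟩ := C.ttrap_back htri (r0 - 1) (by omega) h2
      rcases hc with ⟨hc1, _⟩ | ⟨hc1, _⟩ | ⟨hc1, _⟩
      · have := C.forced hae hab heb (by omega) hs hc1 hsIa
        omega
      · by_cases hrb : r = b
        · have := sgla j (by omega) (hrb ▸ hc1)
          omega
        · have := C.forced htri.adj13 hab hrb (by omega) hs hc1 hsIa
          omega
      · have := C.forced htri.adj23 hae.symm htri.adj13.ne' (by omega) hr0n hc1 h1'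
        omega

/-- If the path enters `η(ab)` at `s` through `η(ab,a)` coming from `η(ae,a)` and
immediately leaves again into `η(ae,a)`, we get a contradiction. -/
lemma noexit {a b e : H'} {s : ℕ} (hab : H.Adj a b) (hae : H.Adj a e) (heb : e ≠ b)
    (hs0 : 0 < s) (hsn : s + 1 < C.n)
    (hα : C.f (s - 1) ∈ D.ηi a e) (hsIa : C.f s ∈ D.ηi a b)
    (sgla : ∀ k, k < C.n → C.f k ∈ D.ηi a b → k = s)
    (hmin : ∀ j, j < s → C.f j ∉ D.ηe a b)
    (hnext : C.f (s + 1) ∈ D.ηi a e) : False := by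
  have hanch := C.anchorE hab hae heb (by omega) hs0 hα hsIa sgla hmin
  have stay : ∀ m, s + 1 ≤ m → m < C.n → C.f m ∈ D.ηe a e := by
    intro m hm
    induction m, hm using Nat.le_induction with
    | base => exact fun _ => D.ηi_sub _ _ hnext
    | succ m hm IH =>
      intro hm1
      have hmn : m < C.n := by omega
      have hme := IH hmn
      by_contra hnot
      rcases C.cross (c := a) (d := e) (i := m) (j := m + 1) hmn (by omega) (Or.inl rfl) hme hnot with
        ⟨h1, h2⟩ | ⟨h1, h2⟩ | ⟨r, htri, h1, h1', h2⟩
      · -- leaving through node a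
        rcases h2 with ⟨g, hag, hge, hmem⟩ | hv
        · by_cases hgb : g = b
          · have := sgla (m + 1) (by omega) (hgb ▸ hmem)
            omega
          · have := C.forced hag hab hgb (by omega) (by omega) hmem hsIa
            omega
        · obtain ⟨j, g, hj, hjn, hag, hmemj⟩ := C.vtrap_fwd (i := m + 1) (by omega) hv
          by_cases hgb : g = b
          · have := sgla j hjn (hgb ▸ hmemj)
            omega
          · have := C.forced hag hab hgb hjn (by omega) hmemj hsIa
            omega
      · -- leaving through node e
        rcases hanch with ⟨rfl, rfl⟩ | ⟨r0, hr0s, hsing⟩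
        · rcases h2 with ⟨g, heg, hga, _⟩ | hv
          · exact hga (C.hpend g heg)
          · rw [C.hpv] at hv
            exact hv
        · have := hsing m hmn h1
          omega
      · -- leaving through a triangle
        rcases hanch with ⟨rfl, rfl⟩ | ⟨r0, hr0s, hsing⟩
        · have hr : r = C.q := C.hpend r htri.adj23
          exact htri.adj13.ne hr.symm
        · have := hsing m hmn h1'
          omega
  have hlast : C.f (C.n - 1) ∈ D.ηe a e := stay (C.n - 1) (by omega) (by omega)
  rcases D.ee_eq C.y_mem_e hlast with ⟨hp'a, hq'e⟩ | ⟨hp'e, hq'a⟩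
  · have hbq := C.hpend' b (hp'a ▸ hab)
    exact heb (hq'e ▸ hbq).symm
  · have hy : C.f (C.n - 1) ∈ D.ηi e a := by
      have h := C.y_mem
      rwa [hp'e, hq'a] at h
    rcases hanch with ⟨rfl, rfl⟩ | ⟨r0, hr0s, hsing⟩
    · have h := C.hyi
      rw [hp'e, hq'a, C.hxi] at h
      exact C.hxy (Set.singleton_eq_singleton_iff.mp h)
    · have := hsing (C.n - 1) (by omega) hy
      omega

end PCtx
end Path5

section Path6
variable {V : Type*} {H' : Type*} {G : SimpleGraph V} {H : SimpleGraph H'}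
namespace PCtx
variable {D : ESD G H} (C : PCtx D)

/-- If `a` is pendant (only neighbour `b`) with `η(a) = ∅`, any crossing out of
`η(ab)` happens on the `b` side. -/
lemma sealNoCross {a b : H'} (hab : H.Adj a b) (hpendA : ∀ u, H.Adj a u → u = b)
    (hva : D.ηv a = ∅) {i j : ℕ} (hi : i < C.n) (hj : j < C.n)
    (hij : i + 1 = j ∨ j + 1 = i) (hiE : C.f i ∈ D.ηe a b) (hjE : C.f j ∉ D.ηe a b) :
    C.f i ∈ D.ηi b a ∧ ((∃ e, H.Adj b e ∧ e ≠ a ∧ C.f j ∈ D.ηi b e) ∨ C.f j ∈ D.ηv b) := by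
  rcases C.cross hi hj hij hiE hjE with ⟨h1, h2⟩ | ⟨h1, h2⟩ | ⟨r, htri, h1, h1', h2⟩
  · exfalso
    rcases h2 with ⟨e, hae, heb, _⟩ | hv
    · exact heb (hpendA e hae)
    · rw [hva] at hv
      exact hv
  · exact ⟨h1, h2⟩
  · exfalso
    have hr : r = b := hpendA r htri.adj13
    exact htri.adj23.ne hr.symm

/-- If both `a` and `b` are pendant towards each other and the path starts in
`η(ab)`, it stays there forever. -/
lemma allE {a b : H'} (hab : H.Adj a b)
    (hpendA : ∀ u, H.Adj a u → u = b) (hva : D.ηv a = ∅)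
    (hpendB : ∀ u, H.Adj b u → u = a) (hvb : D.ηv b = ∅)
    (h0E : C.f 0 ∈ D.ηe a b) : ∀ i, i < C.n → C.f i ∈ D.ηe a b := by
  intro i
  induction i with
  | zero => exact fun _ => h0E
  | succ i IH =>
    intro hi
    by_contra hnot
    obtain ⟨_, h2⟩ := C.sealNoCross hab hpendA hva (i := i) (j := i + 1) (by omega) hi
      (Or.inl rfl) (IH (by omega)) hnot
    rcases h2 with ⟨e, hbe, hea, _⟩ | hv
    · exact hea (hpendB e hbe)
    · rw [hvb] at hv
      exact hv

/-- Case `x ∈ η(ab)` with `(p,q) = (a,b)` and `t + 1 < n`. -/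
lemma case2core {a b : H'} {t : ℕ} (hab : H.Adj a b)
    (hpendA : ∀ u, H.Adj a u → u = b) (hva : D.ηv a = ∅)
    (hIa : D.ηi a b = {C.f 0}) (h0E : C.f 0 ∈ D.ηe a b)
    (ht : t + 1 < C.n) (htE : C.f t ∈ D.ηe a b)
    (hmax : ∀ j, t < j → j < C.n → C.f j ∉ D.ηe a b) :
    C.f t ∈ D.ηi b a ∧ (∀ i, i ≤ t → C.f i ∈ D.ηe a b) ∧
    (∀ i, 0 < i → i < t → C.f i ∉ D.ηi a b ∧ C.f i ∉ D.ηi b a) := by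
  rcases C.xcl hab ht htE hmax with ⟨_, e, hae, heb, _⟩ | ⟨htIb, e', hbe', he'a, hβ⟩
  · exact absurd (hpendA e hae) heb
  · have sglb : ∀ k, k < C.n → C.f k ∈ D.ηi b a → k = t := by
      intro k hk hkI
      rcases C.forced hab.symm hbe' (fun h => he'a h.symm) hk (by omega) hkI hβ with h | h
      · omega
      · exfalso
        refine hmax k (by omega) hk ?_
        rw [D.ηe_symm]
        exact D.ηi_sub _ _ hkI
    have hall : ∀ i, i ≤ t → C.f i ∈ D.ηe a b := by
      intro i
      induction i with
      | zero => exact fun _ => h0E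
      | succ i IH =>
        intro hi1
        by_contra hnot
        obtain ⟨hIb', _⟩ := C.sealNoCross hab hpendA hva (i := i) (j := i + 1) (by omega)
          (by omega) (Or.inl rfl) (IH (by omega)) hnot
        have := sglb i (by omega) hIb'
        omega
    refine ⟨htIb, hall, fun i h0i hit => ⟨?_, ?_⟩⟩
    · intro hmem
      rw [hIa] at hmem
      have := C.inj i 0 (by omega) (by omega) hmem
      omega
    · intro hmem
      have := sglb i (by omega) hmem
      omega

/-- Case `x ∈ η(ab)` with `(p,q) = (a,b)`, general `t`. -/
lemma case12 {a b : H'} {t : ℕ} (hab : H.Adj a b)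
    (hpendA : ∀ u, H.Adj a u → u = b) (hva : D.ηv a = ∅)
    (hIa : D.ηi a b = {C.f 0}) (h0E : C.f 0 ∈ D.ηe a b)
    (htn : t < C.n) (htE : C.f t ∈ D.ηe a b)
    (hmax : ∀ j, t < j → j < C.n → C.f j ∉ D.ηe a b) :
    C.f t ∈ D.ηi b a ∧ (∀ i, i ≤ t → C.f i ∈ D.ηe a b) ∧
    (∀ i, 0 < i → i < t → C.f i ∉ D.ηi a b ∧ C.f i ∉ D.ηi b a) := by
  rcases Nat.lt_or_ge t (C.n - 1) with ht1 | ht2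
  · exact C.case2core hab hpendA hva hIa h0E (by omega) htE hmax
  · have htn1 : t = C.n - 1 := by
      have := C.hn
      omega
    have hy : C.f (C.n - 1) ∈ D.ηe a b := htn1 ▸ htE
    rcases D.ee_eq C.y_mem_e hy with ⟨hp'a, hq'b⟩ | ⟨hp'b, hq'a⟩
    · exfalso
      have h := C.hyi
      rw [hp'a, hq'b, hIa] at h
      exact C.hxy (Set.singleton_eq_singleton_iff.mp h)
    · have hpendB : ∀ u, H.Adj b u → u = a := fun u hu => by
        have h : H.Adj C.p' u := by rw [hp'b]; exact hu
        rw [← hq'a]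
        exact C.hpend' u h
      have hvb : D.ηv b = ∅ := by rw [← hp'b]; exact C.hpv'
      have hIb : D.ηi b a = {C.f (C.n - 1)} := by rw [← hp'b, ← hq'a]; exact C.hyi
      have hall := C.allE hab hpendA hva hpendB hvb h0E
      refine ⟨?_, fun i hi => hall i (by omega), fun i h0i hit => ⟨?_, ?_⟩⟩
      · rw [htn1, hIb]
        rfl
      · intro hmem
        rw [hIa] at hmem
        have := C.inj i 0 (by omega) (by omega) hmem
        omega
      · intro hmem
        rw [hIb] at hmem
        have := C.inj i (C.n - 1) (by omega) (by omega) hmem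
        omega

/-- Case `0 < s ≤ t < n - 1`, entry on side `a`. -/
lemma case4core {a b : H'} {s t : ℕ} (hab : H.Adj a b)
    (hs0 : 0 < s) (hst : s ≤ t) (htn : t + 1 < C.n)
    (htE : C.f t ∈ D.ηe a b)
    (hmin : ∀ j, j < s → C.f j ∉ D.ηe a b)
    (hmax : ∀ j, t < j → j < C.n → C.f j ∉ D.ηe a b)
    (hsIa : C.f s ∈ D.ηi a b) {e : H'} (hae : H.Adj a e) (heb : e ≠ b)
    (hα : C.f (s - 1) ∈ D.ηi a e) :
    C.f t ∈ D.ηi b a ∧ (∀ i, s ≤ i → i ≤ t → C.f i ∈ D.ηe a b) ∧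
    (∀ i, s < i → i < t → C.f i ∉ D.ηi a b ∧ C.f i ∉ D.ηi b a) := by
  have hsn : s < C.n := by omega
  have sgla : ∀ k, k < C.n → C.f k ∈ D.ηi a b → k = s := by
    intro k hk hkI
    rcases C.forced hae hab heb (by omega) hk hα hkI with h | h
    · omega
    · exfalso
      exact hmin k (by omega) (D.ηi_sub _ _ hkI)
  rcases C.xcl hab htn htE hmax with ⟨htIa, e2, hae2, he2b, hβ⟩ | ⟨htIb, e', hbe', he'a, hβ⟩
  · exfalso
    have hts : t = s := sgla t (by omega) htIa
    subst hts
    have he2e : e2 = e := by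
      by_contra hne
      rcases C.forced hae hae2 (fun h => hne h.symm) (by omega) (by omega) hα hβ with h | h <;>
        omega
    exact C.noexit hab hae heb hs0 (by omega) hα hsIa sgla hmin (he2e ▸ hβ)
  · have sglb : ∀ k, k < C.n → C.f k ∈ D.ηi b a → k = t := by
      intro k hk hkI
      rcases C.forced hab.symm hbe' (fun h => he'a h.symm) hk (by omega) hkI hβ with h | h
      · omega
      · exfalso
        refine hmax k (by omega) hk ?_
        rw [D.ηe_symm]
        exact D.ηi_sub _ _ hkI
    have hall : ∀ i, s ≤ i → i ≤ t → C.f i ∈ D.ηe a b := by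
      by_contra hnot
      push_neg at hnot
      obtain ⟨i0', hsi0', hi0t', hi0E'⟩ := hnot
      classical
      have hex : ∃ i, s ≤ i ∧ i ≤ t ∧ C.f i ∉ D.ηe a b := ⟨i0', hsi0', hi0t', hi0E'⟩
      obtain ⟨hsi0, hi0t, hi0E⟩ := Nat.find_spec hex
      set i0 := Nat.find hex with hi0def
      have hi0s : s < i0 := by
        rcases Nat.lt_or_ge s i0 with h | h
        · exact h
        · exfalso
          have hss : i0 = s := by omega
          exact hi0E (hss ▸ D.ηi_sub _ _ hsIa)
      have hprev : C.f (i0 - 1) ∈ D.ηe a b := by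
        by_contra hp
        exact Nat.find_min hex (m := i0 - 1) (by omega) ⟨by omega, by omega, hp⟩
      have hi0lt : i0 < t := by
        rcases Nat.lt_or_ge i0 t with h | h
        · exact h
        · exfalso
          have hss : i0 = t := by omega
          exact hi0E (hss ▸ htE)
      rcases C.cross (i := i0 - 1) (j := i0) (by omega) (by omega) (Or.inl (by omega))
        hprev hi0E with ⟨h1, h2⟩ | ⟨h1, h2⟩ | ⟨_, _, h1, h1', _⟩
      · have hi1s : i0 - 1 = s := sgla _ (by omega) h1
        rcases h2 with ⟨g, hag, hge, hmem⟩ | hv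
        · by_cases hgb : g = b
          · have := sgla i0 (by omega) (hgb ▸ hmem)
            omega
          · by_cases hge' : g = e
            · have hmem' : C.f (s + 1) ∈ D.ηi a e := by
                rw [show s + 1 = i0 by omega]
                exact hge' ▸ hmem
              exact C.noexit hab hae heb hs0 (by omega) hα hsIa sgla hmin hmem'
            · rcases C.forced hae hag (fun h => hge' h.symm) (by omega) (by omega) hα hmem with
                h | h <;> omega
        · obtain ⟨j, g, hj, hjn, hag, hmemj⟩ := C.vtrap_fwd (i := i0) (by omega) hv
          by_cases hgb : g = b
          · have := sgla j hjn (hgb ▸ hmemj)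
            omega
          · rcases C.forced hag hab hgb hjn hsn hmemj hsIa with h | h <;> omega
      · have := sglb _ (by omega) h1
        omega
      · have h1s := sgla _ (by omega) h1
        have h1t := sglb _ (by omega) h1'
        omega
    refine ⟨htIb, hall, fun i h1 h2 => ⟨fun hm => ?_, fun hm => ?_⟩⟩
    · have := sgla i (by omega) hm
      omega
    · have := sglb i (by omega) hm
      omega

end PCtx
end Path6

section Path7
variable {V : Type*} {H' : Type*} {G : SimpleGraph V} {H : SimpleGraph H'}
namespace PCtx
variable {D : ESD G H} (C : PCtx D)

lemma main {a b : H'} (hab : H.Adj a b)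
    (hmeet : ∃ i, i < C.n ∧ C.f i ∈ D.ηe a b) :
    ∃ s t, s ≤ t ∧ t < C.n ∧
      (∀ i, i < C.n → (C.f i ∈ D.ηe a b ↔ (s ≤ i ∧ i ≤ t))) ∧
      ((C.f s ∈ D.ηi a b ∧ C.f t ∈ D.ηi b a) ∨ (C.f s ∈ D.ηi b a ∧ C.f t ∈ D.ηi a b)) ∧
      (∀ i, s < i → i < t → C.f i ∉ D.ηi a b ∧ C.f i ∉ D.ηi b a) := by
  classical
  obtain ⟨hsn, hsE⟩ := Nat.find_spec hmeet
  set s := Nat.find hmeet with hsdef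
  have hmin : ∀ j, j < s → C.f j ∉ D.ηe a b := fun j hj hm =>
    Nat.find_min hmeet hj ⟨by omega, hm⟩
  have hnn := C.hn
  have htE : C.f (Nat.findGreatest (fun i => C.f i ∈ D.ηe a b) (C.n - 1)) ∈ D.ηe a b :=
    Nat.findGreatest_spec (P := fun i => C.f i ∈ D.ηe a b) (m := s) (n := C.n - 1) (by omega) hsE
  have htn : Nat.findGreatest (fun i => C.f i ∈ D.ηe a b) (C.n - 1) < C.n := by
    have h : Nat.findGreatest (fun i => C.f i ∈ D.ηe a b) (C.n - 1) ≤ C.n - 1 :=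
      Nat.findGreatest_le (P := fun i => C.f i ∈ D.ηe a b) (C.n - 1)
    omega
  have hmax : ∀ j, Nat.findGreatest (fun i => C.f i ∈ D.ηe a b) (C.n - 1) < j → j < C.n →
      C.f j ∉ D.ηe a b := by
    intro j h1 h2 hm
    exact Nat.findGreatest_is_greatest (P := fun i => C.f i ∈ D.ηe a b) (n := C.n - 1) h1 (by omega) hm
  set t := Nat.findGreatest (fun i => C.f i ∈ D.ηe a b) (C.n - 1) with htdef
  have hst : s ≤ t := Nat.find_min' hmeet ⟨htn, htE⟩
  have key : ((C.f s ∈ D.ηi a b ∧ C.f t ∈ D.ηi b a) ∨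
        (C.f s ∈ D.ηi b a ∧ C.f t ∈ D.ηi a b)) ∧
      (∀ i, s ≤ i → i ≤ t → C.f i ∈ D.ηe a b) ∧
      (∀ i, s < i → i < t → C.f i ∉ D.ηi a b ∧ C.f i ∉ D.ηi b a) := by
    rcases Nat.eq_zero_or_pos s with hs0 | hs0
    · -- x ∈ η(ab)
      have hx : C.f 0 ∈ D.ηe a b := by rw [← hs0]; exact hsE
      rcases D.ee_eq C.x_mem_e hx with ⟨hpa, hqb⟩ | ⟨hpb, hqa⟩
      · have hpendA : ∀ u, H.Adj a u → u = b := fun u hu => by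
          have h : H.Adj C.p u := by rw [hpa]; exact hu
          rw [← hqb]
          exact C.hpend u h
        have hva : D.ηv a = ∅ := by rw [← hpa]; exact C.hpv
        have hIa : D.ηi a b = {C.f 0} := by rw [← hpa, ← hqb]; exact C.hxi
        obtain ⟨htIb, hall, hint⟩ := C.case12 hab hpendA hva hIa hx htn htE hmax
        refine ⟨Or.inl ⟨?_, htIb⟩, fun i _ h2 => hall i h2,
          fun i h1 h2 => hint i (by omega) h2⟩
        rw [hs0, hIa]
        rfl
      · have hpendB : ∀ u, H.Adj b u → u = a := fun u hu => by
          have h : H.Adj C.p u := by rw [hpb]; exact hu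
          rw [← hqa]
          exact C.hpend u h
        have hvb : D.ηv b = ∅ := by rw [← hpb]; exact C.hpv
        have hIb : D.ηi b a = {C.f 0} := by rw [← hpb, ← hqa]; exact C.hxi
        have hx' : C.f 0 ∈ D.ηe b a := by rw [D.ηe_symm b a]; exact hx
        have htE' : C.f t ∈ D.ηe b a := by rw [D.ηe_symm b a]; exact htE
        have hmax' : ∀ j, t < j → j < C.n → C.f j ∉ D.ηe b a := by
          intro j h1 h2
          rw [D.ηe_symm b a]
          exact hmax j h1 h2
        obtain ⟨htIa, hall, hint⟩ := C.case12 hab.symm hpendB hvb hIb hx' htn htE' hmax'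
        refine ⟨Or.inr ⟨?_, htIa⟩, fun i _ h2 => ?_, fun i h1 h2 =>
          ⟨(hint i (by omega) h2).2, (hint i (by omega) h2).1⟩⟩
        · rw [hs0, hIb]
          rfl
        · have h := hall i h2
          rwa [D.ηe_symm b a] at h
    · rcases Nat.lt_or_ge t (C.n - 1) with ht1 | ht2
      · -- interior case
        rcases C.ecl hab (by omega) hs0 hsE hmin with
          ⟨hsIa, e, hae, heb, hα⟩ | ⟨hsIb, e, hbe, hea, hα⟩
        · obtain ⟨htIb, hall, hint⟩ :=
            C.case4core hab hs0 hst (by omega) htE hmin hmax hsIa hae heb hα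
          exact ⟨Or.inl ⟨hsIa, htIb⟩, hall, hint⟩
        · have htE' : C.f t ∈ D.ηe b a := by rw [D.ηe_symm b a]; exact htE
          have hmin' : ∀ j, j < s → C.f j ∉ D.ηe b a := by
            intro j h1
            rw [D.ηe_symm b a]
            exact hmin j h1
          have hmax' : ∀ j, t < j → j < C.n → C.f j ∉ D.ηe b a := by
            intro j h1 h2
            rw [D.ηe_symm b a]
            exact hmax j h1 h2
          obtain ⟨htIa, hall, hint⟩ :=
            C.case4core hab.symm hs0 hst (by omega) htE' hmin' hmax' hsIb hbe hea hα
          refine ⟨Or.inr ⟨hsIb, htIa⟩, fun i h1 h2 => ?_, fun i h1 h2 =>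
            ⟨(hint i h1 h2).2, (hint i h1 h2).1⟩⟩
          have h := hall i h1 h2
          rwa [D.ηe_symm b a] at h
      · -- y ∈ η(ab) : reverse the path
        have htn1 : t = C.n - 1 := by omega
        have hy : C.f (C.n - 1) ∈ D.ηe a b := htn1 ▸ htE
        rcases D.ee_eq C.y_mem_e hy with ⟨hp'a, hq'b⟩ | ⟨hp'b, hq'a⟩
        · have hpendA : ∀ u, H.Adj a u → u = b := fun u hu => by
            have h : H.Adj C.p' u := by rw [hp'a]; exact hu
            rw [← hq'b]
            exact C.hpend' u h
          have hva : D.ηv a = ∅ := by rw [← hp'a]; exact C.hpv'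
          have hIa : D.ηi a b = {C.f (C.n - 1)} := by rw [← hp'a, ← hq'b]; exact C.hyi
          have h0E' : C.reverse.f 0 ∈ D.ηe a b := by simpa using hy
          have htE' : C.reverse.f (C.n - 1 - s) ∈ D.ηe a b := by
            simp only [reverse_f]
            rw [show C.n - 1 - (C.n - 1 - s) = s by omega]
            exact hsE
          have hmax' : ∀ j, C.n - 1 - s < j → j < C.reverse.n → C.reverse.f j ∉ D.ηe a b := by
            intro j h1 h2
            simp only [reverse_f, reverse_n] at *
            exact hmin _ (by omega)
          have hIa' : D.ηi a b = {C.reverse.f 0} := by simpa using hIa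
          obtain ⟨htIb, hall, hint⟩ := C.reverse.case12 hab hpendA hva hIa' h0E'
            (by simp; omega) htE' hmax'
          refine ⟨Or.inr ⟨?_, ?_⟩, fun i h1 h2 => ?_, fun i h1 h2 => ?_⟩
          · have h := htIb
            simp only [reverse_f] at h
            rwa [show C.n - 1 - (C.n - 1 - s) = s by omega] at h
          · rw [htn1, hIa]
            rfl
          · have h := hall (C.n - 1 - i) (by omega)
            simp only [reverse_f] at h
            rwa [show C.n - 1 - (C.n - 1 - i) = i by omega] at h
          · have h := hint (C.n - 1 - i) (by omega) (by omega)
            simp only [reverse_f] at h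
            rwa [show C.n - 1 - (C.n - 1 - i) = i by omega] at h
        · have hpendB : ∀ u, H.Adj b u → u = a := fun u hu => by
            have h : H.Adj C.p' u := by rw [hp'b]; exact hu
            rw [← hq'a]
            exact C.hpend' u h
          have hvb : D.ηv b = ∅ := by rw [← hp'b]; exact C.hpv'
          have hIb : D.ηi b a = {C.f (C.n - 1)} := by rw [← hp'b, ← hq'a]; exact C.hyi
          have h0E' : C.reverse.f 0 ∈ D.ηe b a := by
            rw [D.ηe_symm b a]
            simpa using hy
          have htE' : C.reverse.f (C.n - 1 - s) ∈ D.ηe b a := by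
            simp only [reverse_f]
            rw [show C.n - 1 - (C.n - 1 - s) = s by omega, D.ηe_symm b a]
            exact hsE
          have hmax' : ∀ j, C.n - 1 - s < j → j < C.reverse.n → C.reverse.f j ∉ D.ηe b a := by
            intro j h1 h2
            simp only [reverse_f, reverse_n] at *
            rw [D.ηe_symm b a]
            exact hmin _ (by omega)
          have hIb' : D.ηi b a = {C.reverse.f 0} := by simpa using hIb
          obtain ⟨htIa, hall, hint⟩ := C.reverse.case12 hab.symm hpendB hvb hIb' h0E'
            (by simp; omega) htE' hmax'
          refine ⟨Or.inl ⟨?_, ?_⟩, fun i h1 h2 => ?_, fun i h1 h2 => ?_⟩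
          · have h := htIa
            simp only [reverse_f] at h
            rwa [show C.n - 1 - (C.n - 1 - s) = s by omega] at h
          · rw [htn1, hIb]
            rfl
          · have h := hall (C.n - 1 - i) (by omega)
            simp only [reverse_f] at h
            rw [show C.n - 1 - (C.n - 1 - i) = i by omega] at h
            rwa [D.ηe_symm b a] at h
          · have h := hint (C.n - 1 - i) (by omega) (by omega)
            simp only [reverse_f] at h
            rw [show C.n - 1 - (C.n - 1 - i) = i by omega] at h
            exact ⟨h.2, h.1⟩
  refine ⟨s, t, hst, htn, fun i hi => ⟨fun hm => ⟨?_, ?_⟩, fun hm => key.2.1 i hm.1 hm.2⟩,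
    key.1, key.2.2⟩
  · by_contra h
    exact hmin i (by omega) hm
  · by_contra h
    exact hmax i (by omega) hi hm

end PCtx
end Path7

/-- the intersection of an induced path between two distinct peripheral
vertices with an edge set `η(e)` induces a path with endpoints in the two interfaces
and internal vertices in the interior of `η(e)`. -/
theorem path_inside_edge_structure {V : Type*} {H' : Type*}
    (G : SimpleGraph V) (H : SimpleGraph H') (D : ESD G H)
    (l : List V) (hl : IsInducedPathList G l) (hne : l ≠ [])
    (hx : D.Peripheral (l.head hne)) (hy : D.Peripheral (l.getLast hne))
    (hxy : l.head hne ≠ l.getLast hne)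
    (a b : H') (hab : H.Adj a b) (hmeet : ∃ u ∈ l, u ∈ D.ηe a b) :
    ∃ (m : List V) (hm : m ≠ []), IsInducedPathList G m ∧
      {v | v ∈ m} = {v | v ∈ l} ∩ D.ηe a b ∧
      ((m.head hm ∈ D.ηi a b ∧ m.getLast hm ∈ D.ηi b a) ∨
       (m.head hm ∈ D.ηi b a ∧ m.getLast hm ∈ D.ηi a b)) ∧
      (∀ v ∈ m, v ≠ m.head hm → v ≠ m.getLast hm →
        v ∈ D.ηe a b \ (D.ηi a b ∪ D.ηi b a)) := by
  classical
  obtain ⟨-, hnodup, hadjl⟩ := hl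
  have hn0 : 0 < l.length := List.length_pos_iff.mpr hne
  set f : ℕ → V := fun i => if h : i < l.length then l[i] else l.head hne with hfdef
  have hf : ∀ i (h : i < l.length), f i = l[i] := fun i h => dif_pos h
  have hhead : l.head hne = f 0 := by
    rw [hf 0 hn0]
    exact List.head_eq_getElem_zero hne
  have hlastv : l.getLast hne = f (l.length - 1) := by
    rw [hf (l.length - 1) (by omega)]
    exact List.getLast_eq_getElem hne
  have hinj : ∀ i j, i < l.length → j < l.length → f i = f j → i = j := by
    intro i j hi hj hfe
    rw [hf i hi, hf j hj] at hfe
    exact (List.Nodup.getElem_inj_iff hnodup (hi := hi) (hj := hj)).mp hfe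
  have hadjf : ∀ i j, i < l.length → j < l.length →
      (G.Adj (f i) (f j) ↔ (i + 1 = j ∨ j + 1 = i)) := by
    intro i j hi hj
    rw [hf i hi, hf j hj]
    exact hadjl i j hi hj
  have hn2 : 2 ≤ l.length := by
    by_contra h
    have h1 : l.length = 1 := by omega
    exact hxy (by rw [hhead, hlastv, h1])
  obtain ⟨p, q, hpq, hpend, hxi, hpv⟩ := hx
  obtain ⟨p', q', hpq', hpend', hyi, hpv'⟩ := hy
  rw [hhead] at hxi
  rw [hlastv] at hyi
  let C : PCtx D := ⟨l.length, f, hn2, hinj, hadjf, p, q, p', q', hpq, hpend, hxi, hpv,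
    hpq', hpend', hyi, hpv', by rw [← hhead, ← hlastv]; exact hxy⟩
  have hmeet' : ∃ i, i < C.n ∧ C.f i ∈ D.ηe a b := by
    obtain ⟨u, hul, huE⟩ := hmeet
    obtain ⟨i, hi, hgi⟩ := List.mem_iff_getElem.mp hul
    refine ⟨i, hi, ?_⟩
    show f i ∈ _
    rw [hf i hi, hgi]
    exact huE
  obtain ⟨s, t, hst, htn, hiff, hG2, hG3⟩ := C.main hab hmeet'
  replace htn : t < l.length := htn
  replace hiff : ∀ i, i < l.length → ((f i ∈ D.ηe a b) ↔ (s ≤ i ∧ i ≤ t)) := hiff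
  replace hG2 : (f s ∈ D.ηi a b ∧ f t ∈ D.ηi b a) ∨
      (f s ∈ D.ηi b a ∧ f t ∈ D.ηi a b) := hG2
  replace hG3 : ∀ i, s < i → i < t → f i ∉ D.ηi a b ∧ f i ∉ D.ηi b a := hG3
  set k := t + 1 - s with hkdef
  have hmlen0 : ((l.drop s).take k).length = k := by
    rw [List.length_take, List.length_drop]
    omega
  have hmget0 : ∀ (i : ℕ) (hh : i < ((l.drop s).take k).length),
      ((l.drop s).take k)[i]'hh = f (s + i) := by
    intro i hh
    have hik : i < k := by rwa [hmlen0] at hh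
    have hsi : s + i < l.length := by omega
    rw [List.getElem_take, List.getElem_drop, hf (s + i) hsi]
  set m := (l.drop s).take k with hmdef
  have hmlen : m.length = k := hmlen0
  have hmget : ∀ (i : ℕ) (hh : i < m.length), m[i]'hh = f (s + i) := hmget0
  have hm : m ≠ [] := by
    have h : 0 < m.length := by rw [hmlen]; omega
    exact List.length_pos_iff.mp h
  have hmhead : m.head hm = f s := by
    rw [List.head_eq_getElem_zero hm, hmget 0 (by rw [hmlen]; omega), Nat.add_zero]
  have hmlast : m.getLast hm = f t := by
    rw [List.getLast_eq_getElem hm, hmget (m.length - 1) (by rw [hmlen]; omega)]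
    congr 1
    rw [hmlen]
    omega
  have hmemchar : ∀ v, v ∈ m ↔ (v ∈ l ∧ v ∈ D.ηe a b) := by
    intro v
    constructor
    · intro hvm
      obtain ⟨i, hi, hgi⟩ := List.mem_iff_getElem.mp hvm
      have hgi' : f (s + i) = v := by rw [← hmget i hi]; exact hgi
      have hik : i < k := by rwa [hmlen] at hi
      constructor
      · rw [← hgi', hf (s + i) (by omega)]
        exact List.getElem_mem _
      · rw [← hgi']
        exact (hiff (s + i) (by omega)).mpr ⟨by omega, by omega⟩
    · rintro ⟨hvl, hvE⟩
      obtain ⟨i, hi, hgi⟩ := List.mem_iff_getElem.mp hvl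
      have hfi : f i = v := by rw [hf i hi]; exact hgi
      have hrange := (hiff i hi).mp (by rw [hfi]; exact hvE)
      refine List.mem_iff_getElem.mpr ⟨i - s, by rw [hmlen]; omega, ?_⟩
      rw [hmget (i - s) (by rw [hmlen]; omega), show s + (i - s) = i by omega]
      exact hfi
  refine ⟨m, hm, ⟨hm, ?_, ?_⟩, ?_, ?_, ?_⟩
  · -- nodup
    have hsub : List.Sublist m l := by
      rw [hmdef]
      exact ((l.drop s).take_sublist k).trans (l.drop_sublist s)
    exact List.Nodup.sublist hsub hnodup
  · -- adjacency
    intro i j hi hj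
    have hik : i < k := by rwa [hmlen] at hi
    have hjk : j < k := by rwa [hmlen] at hj
    rw [List.get_eq_getElem, List.get_eq_getElem, hmget i hi, hmget j hj]
    refine (hadjf (s + i) (s + j) (by omega) (by omega)).trans ?_
    constructor <;> intro h <;> omega
  · -- set equality
    ext v
    simp only [Set.mem_setOf_eq, Set.mem_inter_iff]
    exact hmemchar v
  · -- endpoints
    rw [hmhead, hmlast]
    exact hG2
  · -- internals
    intro v hvm hv1 hv2
    obtain ⟨i, hi, hgi⟩ := List.mem_iff_getElem.mp hvm
    have hgi' : f (s + i) = v := by rw [← hmget i hi]; exact hgi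
    have hik : i < k := by rwa [hmlen] at hi
    have hi0 : i ≠ 0 := by
      intro h
      have hv : v = f s := by rw [← hgi', h, Nat.add_zero]
      exact hv1 (hv.trans hmhead.symm)
    have hit : s + i ≠ t := by
      intro h
      have hv : v = f t := by rw [← hgi', h]
      exact hv2 (hv.trans hmlast.symm)
    have hG3' := hG3 (s + i) (by omega) (by omega)
    have hE : f (s + i) ∈ D.ηe a b := (hiff (s + i) (by omega)).mpr ⟨by omega, by omega⟩
    rw [← hgi']
    refine ⟨hE, ?_⟩
    rintro (h | h)
    · exact hG3'.1 h
    · exact hG3'.2 h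
end

section
/- Let (H, η) be an extended strip decomposition of a graph G, let z ∈ V(G) be peripheral in (H, η), and let Q be an induced path in G with endpoint z. Let pq be an edge of H with z ∉ η(pq) and let A = A_{pq}^{pq} be the corresponding full edge particle. If V(Q) ∩ N[A] ≠ ∅, then there exists an edge f ≠ pq of H and a vertex r ∈ {p, q} with r ∈ f such that η(f, r) ∩ V(Q) ≠ ∅. -/
section MyHelpers

variable {V : Type*} {H' : Type*} {G : SimpleGraph V} {H : SimpleGraph H'}

lemma my_ηt_rot (D : ESD G H) (x y z : H') : D.ηt x y z = D.ηt z x y := by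
  rw [D.ηt_symm23 x y z, D.ηt_symm12 x z y]

lemma my_ηe_subA (D : ESD G H) (p q : H') : D.ηe p q ⊆ D.fullEdge p q := by
  intro v h
  exact Set.mem_union_left _ (Set.mem_union_right _ h)

lemma my_ηvp_subA (D : ESD G H) (p q : H') : D.ηv p ⊆ D.fullEdge p q := by
  intro v h
  exact Set.mem_union_left _ (Set.mem_union_left _ (Set.mem_union_left _ h))

lemma my_ηvq_subA (D : ESD G H) (p q : H') : D.ηv q ⊆ D.fullEdge p q := by
  intro v h
  exact Set.mem_union_left _ (Set.mem_union_left _ (Set.mem_union_right _ h))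

lemma my_ηt_subA (D : ESD G H) (p q r : H') : D.ηt p q r ⊆ D.fullEdge p q := by
  intro v h
  exact Set.mem_union_right _ ⟨r, h⟩

lemma my_memA_ηv (D : ESD G H) {p q t : H'} {a : V} (hat : a ∈ D.ηv t)
    (ha : a ∈ D.fullEdge p q) : t = p ∨ t = q := by
  rcases ha with ((h | h) | h) | ⟨r, h⟩
  · left; by_contra hc
    have h2 : a ∈ D.ηv t ∩ D.ηv p := ⟨hat, h⟩
    rw [D.disj_vv t p hc] at h2; exact h2
  · right; by_contra hc
    have h2 : a ∈ D.ηv t ∩ D.ηv q := ⟨hat, h⟩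
    rw [D.disj_vv t q hc] at h2; exact h2
  · exfalso
    have h2 : a ∈ D.ηv t ∩ D.ηe p q := ⟨hat, h⟩
    rw [D.disj_ve t p q] at h2; exact h2
  · exfalso
    have h2 : a ∈ D.ηv t ∩ D.ηt p q r := ⟨hat, h⟩
    rw [D.disj_vt t p q r] at h2; exact h2

lemma my_memA_ηe (D : ESD G H) {p q s t : H'} {a : V} (hat : a ∈ D.ηe s t)
    (ha : a ∈ D.fullEdge p q) : (s = p ∧ t = q) ∨ (s = q ∧ t = p) := by
  rcases ha with ((h | h) | h) | ⟨r, h⟩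
  · exfalso
    have h2 : a ∈ D.ηv p ∩ D.ηe s t := ⟨h, hat⟩
    rw [D.disj_ve p s t] at h2; exact h2
  · exfalso
    have h2 : a ∈ D.ηv q ∩ D.ηe s t := ⟨h, hat⟩
    rw [D.disj_ve q s t] at h2; exact h2
  · by_contra hc
    rw [not_or] at hc
    have h2 : a ∈ D.ηe s t ∩ D.ηe p q := ⟨hat, h⟩
    rw [D.disj_ee s t p q hc.1 hc.2] at h2; exact h2
  · exfalso
    have h2 : a ∈ D.ηe s t ∩ D.ηt p q r := ⟨hat, h⟩
    rw [D.disj_et s t p q r] at h2; exact h2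

lemma my_tri_perm (D : ESD G H) {p q s t w : H'} (hpq : p ≠ q)
    (hp : p = s ∨ p = t ∨ p = w) (hq : q = s ∨ q = t ∨ q = w) :
    ∃ r, D.ηt s t w = D.ηt p q r := by
  rcases hp with hp | hp | hp <;> rcases hq with hq | hq | hq
  · exact absurd (hp.trans hq.symm) hpq
  · exact ⟨w, by rw [hp, hq]⟩
  · exact ⟨t, by rw [hp, hq]; exact D.ηt_symm23 s t w⟩
  · exact ⟨w, by rw [hp, hq]; exact D.ηt_symm12 s t w⟩
  · exact absurd (hp.trans hq.symm) hpq
  · exact ⟨s, by rw [hp, hq]; exact (my_ηt_rot D s t w).trans (my_ηt_rot D w s t)⟩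
  · exact ⟨t, by rw [hp, hq]; exact my_ηt_rot D s t w⟩
  · exact ⟨s, by rw [hp, hq]; exact (my_ηt_rot D s t w).trans (D.ηt_symm23 w s t)⟩
  · exact absurd (hp.trans hq.symm) hpq

lemma my_memA_ηt_mem (D : ESD G H) {p q s t w : H'} (hpq : p ≠ q) {a : V}
    (hat : a ∈ D.ηt s t w) (ha : a ∈ D.fullEdge p q) :
    (p = s ∨ p = t ∨ p = w) ∧ (q = s ∨ q = t ∨ q = w) := by
  rcases ha with ((h | h) | h) | ⟨r, h⟩
  · exfalso
    have h2 : a ∈ D.ηv p ∩ D.ηt s t w := ⟨h, hat⟩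
    rw [D.disj_vt p s t w] at h2; exact h2
  · exfalso
    have h2 : a ∈ D.ηv q ∩ D.ηt s t w := ⟨h, hat⟩
    rw [D.disj_vt q s t w] at h2; exact h2
  · exfalso
    have h2 : a ∈ D.ηe p q ∩ D.ηt s t w := ⟨h, hat⟩
    rw [D.disj_et p q s t w] at h2; exact h2
  · have hsets : ({s, t, w} : Set H') = {p, q, r} := by
      by_contra hc
      have h2 : a ∈ D.ηt s t w ∩ D.ηt p q r := ⟨hat, h⟩
      rw [D.disj_tt s t w p q r hc] at h2; exact h2
    constructor
    · have : p ∈ ({s, t, w} : Set H') := by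
        rw [hsets]; simp
      simpa using this
    · have : q ∈ ({s, t, w} : Set H') := by
        rw [hsets]; simp
      simpa using this

lemma my_memA_ηt (D : ESD G H) {p q s t w : H'} (hpq : p ≠ q) {a u : V}
    (hat : a ∈ D.ηt s t w) (ha : a ∈ D.fullEdge p q) (hut : u ∈ D.ηt s t w) :
    u ∈ D.fullEdge p q := by
  obtain ⟨hp, hq⟩ := my_memA_ηt_mem D hpq hat ha
  obtain ⟨r, hr⟩ := my_tri_perm D hpq hp hq
  exact my_ηt_subA D p q r (hr ▸ hut)

/-- The key case analysis: a vertex `u` outside the particle adjacent to a vertex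
`a` inside the particle must lie in an interface `η(rs, r)` with `r ∈ {p,q}`,
`rs ≠ pq`. -/
lemma my_key (D : ESD G H) (p q : H') (hpq : H.Adj p q) {u a : V}
    (hu : u ∉ D.fullEdge p q) (ha : a ∈ D.fullEdge p q) (hadj : G.Adj u a) :
    ∃ r s : H', H.Adj r s ∧ (r = p ∨ r = q) ∧
      ¬ (r = p ∧ s = q) ∧ ¬ (r = q ∧ s = p) ∧ u ∈ D.ηi r s := by
  rcases D.edge_cond u a hadj with ⟨x1, hu1, ha1⟩ | ⟨x1, y1, hu1, ha1⟩ |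
    ⟨x1, y1, z1, hu1, ha1⟩ | ⟨x1, y1, z1, hxy, hxz, hyz, hcase⟩ |
    ⟨x1, y1, hxy, hcase⟩ | ⟨x1, y1, z1, htri, hcase⟩
  · -- both in ηv x1
    exfalso
    rcases my_memA_ηv D ha1 ha with rfl | rfl
    · exact hu (my_ηvp_subA D x1 q hu1)
    · exact hu (my_ηvq_subA D p x1 hu1)
  · -- both in ηe x1 y1
    exfalso
    rcases my_memA_ηe D ha1 ha with ⟨rfl, rfl⟩ | ⟨rfl, rfl⟩
    · exact hu (my_ηe_subA D x1 y1 hu1)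
    · rw [D.ηe_symm] at hu1
      exact hu (my_ηe_subA D y1 x1 hu1)
  · -- both in ηt x1 y1 z1
    exact (hu (my_memA_ηt D hpq.ne ha1 ha hu1)).elim
  · -- interface-interface case
    rcases hcase with ⟨hu1, ha1⟩ | ⟨ha1, hu1⟩
    · rcases my_memA_ηe D (D.ηi_sub x1 z1 ha1) ha with ⟨rfl, rfl⟩ | ⟨rfl, rfl⟩
      · exact ⟨x1, y1, hxy, Or.inl rfl, fun h => hyz h.2, fun h => hpq.ne h.1, hu1⟩
      · exact ⟨x1, y1, hxy, Or.inr rfl, fun h => hpq.ne h.1.symm, fun h => hyz h.2, hu1⟩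
    · rcases my_memA_ηe D (D.ηi_sub x1 y1 ha1) ha with ⟨rfl, rfl⟩ | ⟨rfl, rfl⟩
      · exact ⟨x1, z1, hxz, Or.inl rfl, fun h => hyz h.2.symm, fun h => hpq.ne h.1, hu1⟩
      · exact ⟨x1, z1, hxz, Or.inr rfl, fun h => hpq.ne h.1.symm, fun h => hyz h.2.symm, hu1⟩
  · -- interface-vertex case
    rcases hcase with ⟨hu1, ha1⟩ | ⟨ha1, hu1⟩
    · have hx := my_memA_ηv D ha1 ha
      by_cases h1 : x1 = p ∧ y1 = q
      · obtain ⟨rfl, rfl⟩ := h1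
        exact (hu (my_ηe_subA D x1 y1 (D.ηi_sub x1 y1 hu1))).elim
      · by_cases h2 : x1 = q ∧ y1 = p
        · obtain ⟨rfl, rfl⟩ := h2
          have hue : u ∈ D.ηe x1 y1 := D.ηi_sub x1 y1 hu1
          rw [D.ηe_symm] at hue
          exact (hu (my_ηe_subA D y1 x1 hue)).elim
        · exact ⟨x1, y1, hxy, hx, h1, h2, hu1⟩
    · exfalso
      rcases my_memA_ηe D (D.ηi_sub x1 y1 ha1) ha with ⟨rfl, rfl⟩ | ⟨rfl, rfl⟩
      · exact hu (my_ηvp_subA D x1 y1 hu1)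
      · exact hu (my_ηvq_subA D y1 x1 hu1)
  · -- triangle-interface case
    rcases hcase with ⟨hu1, ha1⟩ | ⟨ha1, hu1⟩
    · exfalso
      rcases my_memA_ηe D (D.ηi_sub x1 y1 ha1.1) ha with ⟨rfl, rfl⟩ | ⟨rfl, rfl⟩
      · exact hu (my_ηt_subA D x1 y1 z1 hu1)
      · rw [D.ηt_symm12] at hu1
        exact hu (my_ηt_subA D y1 x1 z1 hu1)
    · obtain ⟨hadj_xy, hadj_yz, hadj_xz⟩ := htri
      obtain ⟨hp, hq⟩ := my_memA_ηt_mem D hpq.ne ha1 ha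
      rcases hp with hp | hp | hp <;> rcases hq with hq | hq | hq
      · exact absurd (hp.trans hq.symm) hpq.ne
      · -- p = x1, q = y1 : u ∈ ηe p q ⊆ A, contradiction
        exfalso
        have hue : u ∈ D.ηe x1 y1 := D.ηi_sub x1 y1 hu1.1
        rw [← hp, ← hq] at hue
        exact hu (my_ηe_subA D p q hue)
      · -- p = x1, q = z1
        exact ⟨x1, y1, hadj_xy, Or.inl hp.symm, fun h => hadj_yz.ne (h.2.trans hq),
          fun h => hpq.ne (hp.trans h.1), hu1.1⟩
      · -- p = y1, q = x1 : u ∈ ηe q p ⊆ A, contradiction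
        exfalso
        have hue : u ∈ D.ηe y1 x1 := D.ηi_sub y1 x1 hu1.2
        rw [← hp, ← hq] at hue
        exact hu (my_ηe_subA D p q hue)
      · exact absurd (hp.trans hq.symm) hpq.ne
      · -- p = y1, q = z1
        exact ⟨y1, x1, hadj_xy.symm, Or.inl hp.symm, fun h => hadj_xz.ne (h.2.trans hq),
          fun h => hpq.ne (hp.trans h.1), hu1.2⟩
      · -- p = z1, q = x1
        exact ⟨x1, y1, hadj_xy, Or.inr hq.symm, fun h => hpq.ne ((hq.trans h.1).symm),
          fun h => hadj_yz.ne (h.2.trans hp), hu1.1⟩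
      · -- p = z1, q = y1
        exact ⟨y1, x1, hadj_xy.symm, Or.inr hq.symm, fun h => hpq.ne ((hq.trans h.1).symm),
          fun h => hadj_xz.ne (h.2.trans hp), hu1.2⟩
      · exact absurd (hp.trans hq.symm) hpq.ne

end MyHelpers

/-- an induced path starting at a peripheral vertex `z ∉ η(pq)` that
meets the closed neighborhood of the full edge particle `A_{pq}^{pq}` must meet an
interface `η(f, r)` with `r ∈ {p, q}` and `f ≠ pq`. -/
theorem enter_particle {V : Type*} {H' : Type*}
    (G : SimpleGraph V) (H : SimpleGraph H') (D : ESD G H)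
    (z : V) (hz : D.Peripheral z)
    (l : List V) (hl : IsInducedPathList G l) (hne : l ≠ []) (hhead : l.head hne = z)
    (p q : H') (hpq : H.Adj p q) (hznot : z ∉ D.ηe p q)
    (hmeet : ∃ u ∈ l, u ∈ closedNbhd G (D.fullEdge p q)) :
    ∃ r s : H', H.Adj r s ∧ (r = p ∨ r = q) ∧
      ¬ (r = p ∧ s = q) ∧ ¬ (r = q ∧ s = p) ∧
      ∃ u ∈ l, u ∈ D.ηi r s := by
  classical
  obtain ⟨x, y, hxy, hdeg, hixy, hvx⟩ := hz
  have hz_i : z ∈ D.ηi x y := by rw [hixy]; rfl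
  have hz_e : z ∈ D.ηe x y := D.ηi_sub x y hz_i
  have hzA : z ∉ D.fullEdge p q := by
    intro h
    rcases my_memA_ηe D hz_e h with ⟨rfl, rfl⟩ | ⟨rfl, rfl⟩
    · exact hznot hz_e
    · rw [D.ηe_symm] at hz_e
      exact hznot hz_e
  by_cases hex : ∃ i, ∃ h : i < l.length, l.get ⟨i, h⟩ ∈ D.fullEdge p q
  · -- some vertex of l lies in the particle; take the first one
    obtain ⟨hlt, hmem⟩ := Nat.find_spec hex
    set n := Nat.find hex with hn
    have hpos : n ≠ 0 := by
      intro h0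
      apply hzA
      have hget0 : l.get ⟨0, h0 ▸ hlt⟩ = z := by
        rw [← hhead, List.head_eq_getElem_zero hne, List.get_eq_getElem]
      rw [← hget0]
      have : l.get ⟨n, hlt⟩ ∈ D.fullEdge p q := hmem
      simpa [h0] using this
    have hlt' : n - 1 < l.length := by omega
    have hnotP : ¬ ∃ h : n - 1 < l.length, l.get ⟨n - 1, h⟩ ∈ D.fullEdge p q :=
      Nat.find_min hex (by omega)
    have hnot : l.get ⟨n - 1, hlt'⟩ ∉ D.fullEdge p q := fun h => hnotP ⟨hlt', h⟩
    have hadj : G.Adj (l.get ⟨n - 1, hlt'⟩) (l.get ⟨n, hlt⟩) :=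
      (hl.2.2 (n - 1) n hlt' hlt).mpr (Or.inl (by omega))
    obtain ⟨r, s, h1, h2, h3, h4, h5⟩ := my_key D p q hpq hnot hmem hadj
    exact ⟨r, s, h1, h2, h3, h4, l.get ⟨n - 1, hlt'⟩, l.get_mem _, h5⟩
  · -- no vertex of l lies in the particle
    obtain ⟨u, hul, hucn⟩ := hmeet
    have huA : u ∉ D.fullEdge p q := by
      intro h
      obtain ⟨m, rfl⟩ := List.mem_iff_get.mp hul
      exact hex ⟨m.1, m.2, h⟩
    rcases hucn with h | ⟨a, haA, hadj⟩
    · exact absurd h huA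
    · obtain ⟨r, s, h1, h2, h3, h4, h5⟩ := my_key D p q hpq huA haA hadj.symm
      exact ⟨r, s, h1, h2, h3, h4, u, hul, h5⟩
end
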